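/- arXiv:1711.06544 — 2 statements merged into one kernel-verified Lean document; each statement's English description precedes it below -/
import Mathlib

section
/- For every ε > 0 and n ≥ 2 there exists a compact set G ⊆ ℝ^n with Assouad dimension at most n − 1/2 + ε such that for every t ∈ (0,1), G contains the boundary of an axis-aligned cube of side length t. -/
open Set Metric MeasureTheory Filter Topology
open scoped ENNReal

/-- Minimal number of closed balls of radius `r` needed to cover `F`. -/
noncomputable def coverNum {X : Type*} [PseudoMetricSpace X] (F : Set X) (r : ℝ) : ℕ :=
  sInf {m : ℕ | ∃ s : Finset X, s.card = m ∧ F ⊆ ⋃ x ∈ s, closedBall x r}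

/-- Lower box(-counting) dimension. -/
noncomputable def lowerBoxDim {X : Type*} [PseudoMetricSpace X] (F : Set X) : ℝ :=
  liminf (fun r : ℝ => Real.log (coverNum F r) / (- Real.log r)) (𝓝[>] 0)

/-- Upper box(-counting) dimension. -/
noncomputable def upperBoxDim {X : Type*} [PseudoMetricSpace X] (F : Set X) : ℝ :=
  limsup (fun r : ℝ => Real.log (coverNum F r) / (- Real.log r)) (𝓝[>] 0)

/-- Assouad dimension. -/
noncomputable def assouadDim {X : Type*} [PseudoMetricSpace X] (F : Set X) : ℝ :=
  sInf {s : ℝ | 0 ≤ s ∧ ∃ C > 0, ∀ x ∈ F, ∀ R > 0, ∀ r : ℝ, 0 < r → r < R →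
    (coverNum (F ∩ closedBall x R) r : ℝ) ≤ C * (R / r) ^ s}

namespace CubePack

lemma coverNum_le_card {X : Type*} [PseudoMetricSpace X] {F : Set X} {r : ℝ} (s : Finset X)
    (h : F ⊆ ⋃ x ∈ s, closedBall x r) : coverNum F r ≤ s.card :=
  Nat.sInf_le ⟨s, rfl, h⟩

/-- weights -/
noncomputable def w (j : ℕ) : ℝ := (1/4) * (1/16)^j

lemma w_nonneg (j : ℕ) : 0 ≤ w j := by unfold w; positivity

lemma geom_bound (K : ℕ) : ∑ i ∈ Finset.range K, (1/16:ℝ)^i ≤ 16/15 := by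
  rw [geom_sum_eq (by norm_num : (1/16:ℝ) ≠ 1) K]
  have hp : (0:ℝ) ≤ (1/16:ℝ)^K := by positivity
  rw [div_le_iff_of_neg (by norm_num : (1/16:ℝ) - 1 < 0)]
  linarith

lemma sum_w_tail (k m : ℕ) : ∑ j ∈ Finset.Ico k m, (3:ℝ) * w j ≤ (4/5) * (1/16)^k := by
  have h1 : ∑ j ∈ Finset.Ico k m, (3:ℝ) * w j
      = (3/4) * ((1/16:ℝ)^k * ∑ i ∈ Finset.range (m - k), (1/16:ℝ)^i) := by
    rw [Finset.sum_Ico_eq_sum_range, Finset.mul_sum, Finset.mul_sum]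
    refine Finset.sum_congr rfl fun i _ => ?_
    simp only [w, pow_add]; ring
  rw [h1]
  have h2 := geom_bound (m - k)
  have hp : (0:ℝ) ≤ (1/16:ℝ)^k := by positivity
  nlinarith

/-- the base set: finite sums of digits (≤ 3) times weights -/
def A : Set ℝ :=
  {x | ∃ m, ∃ a : ℕ → ℕ, (∀ j, a j ≤ 3) ∧ x = ∑ j ∈ Finset.range m, (a j : ℝ) * w j}

def B : Set ℝ := (fun y => -y/4) '' A

noncomputable def F : Set ℝ := closure (A ∪ B)

lemma A_subset : A ⊆ Icc 0 (4/5) := by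
  rintro x ⟨m, a, ha, rfl⟩
  constructor
  · exact Finset.sum_nonneg fun j _ => mul_nonneg (by positivity) (w_nonneg j)
  · calc ∑ j ∈ Finset.range m, (a j : ℝ) * w j
        ≤ ∑ j ∈ Finset.Ico 0 m, (3:ℝ) * w j := by
          rw [Finset.range_eq_Ico]
          exact Finset.sum_le_sum fun j _ => mul_le_mul_of_nonneg_right
            (by exact_mod_cast ha j) (w_nonneg j)
      _ ≤ (4/5) * (1/16)^0 := sum_w_tail 0 m
      _ = 4/5 := by norm_num

lemma zero_mem_A : (0:ℝ) ∈ A := ⟨0, fun _ => 0, fun _ => by norm_num, by simp⟩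

/-- every point of A is within the m-tail of a length-m prefix sum -/
lemma exists_prefix (m : ℕ) {y : ℝ} (hy : y ∈ A) :
    ∃ a : ℕ → ℕ, (∀ j, a j ≤ 3) ∧
      0 ≤ y - ∑ j ∈ Finset.range m, (a j : ℝ) * w j ∧
      y - ∑ j ∈ Finset.range m, (a j : ℝ) * w j ≤ (4/5) * (1/16)^m := by
  obtain ⟨M, a, ha, rfl⟩ := hy
  set a' : ℕ → ℕ := fun j => if j < M then a j else 0 with ha'
  have ha'le : ∀ j, a' j ≤ 3 := fun j => by
    by_cases h : j < M <;> simp [ha', h, ha j]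
  have hfull : ∑ j ∈ Finset.range M, (a j : ℝ) * w j
      = ∑ j ∈ Finset.range (max M m), (a' j : ℝ) * w j := by
    have e1 : ∑ j ∈ Finset.range M, (a j : ℝ) * w j
        = ∑ j ∈ Finset.range M, (a' j : ℝ) * w j := by
      refine Finset.sum_congr rfl fun j hj => ?_
      simp only [Finset.mem_range] at hj
      simp [ha', hj]
    rw [e1]
    refine Finset.sum_subset (Finset.range_subset_range.2 (le_max_left M m)) ?_
    intro j _ hj
    simp only [Finset.mem_range, not_lt] at hj
    simp [ha', not_lt.2 hj]
  have hsplit : ∑ j ∈ Finset.range (max M m), (a' j : ℝ) * w j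
      = ∑ j ∈ Finset.range m, (a' j : ℝ) * w j
        + ∑ j ∈ Finset.Ico m (max M m), (a' j : ℝ) * w j := by
    rw [Finset.range_eq_Ico, Finset.range_eq_Ico]
    exact (Finset.sum_Ico_consecutive _ (Nat.zero_le m) (le_max_right M m)).symm
  have hnn : 0 ≤ ∑ j ∈ Finset.Ico m (max M m), (a' j : ℝ) * w j :=
    Finset.sum_nonneg fun j _ => mul_nonneg (by positivity) (w_nonneg j)
  have h1 : ∑ j ∈ Finset.Ico m (max M m), (a' j : ℝ) * w j
      ≤ ∑ j ∈ Finset.Ico m (max M m), (3:ℝ) * w j :=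
    Finset.sum_le_sum fun j _ => mul_le_mul_of_nonneg_right
      (by exact_mod_cast ha'le j) (w_nonneg j)
  have h2 := sum_w_tail m (max M m)
  exact ⟨a', ha'le, by rw [hfull, hsplit]; linarith, by rw [hfull, hsplit]; linarith⟩


lemma sqrt_ge_one {R r : ℝ} (hr : 0 < r) (hrR : r < R) : 1 ≤ Real.sqrt (R / r) := by
  rw [show (1:ℝ) = Real.sqrt 1 from Real.sqrt_one.symm]
  exact Real.sqrt_le_sqrt ((one_le_div hr).2 hrR.le)

lemma coverA (a R r : ℝ) (hr : 0 < r) (hrR : r < R) (hR : R ≤ 32) :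
    ∃ s : Finset ℝ, (s.card : ℝ) ≤ 136 * Real.sqrt (R / r) ∧
      A ∩ closedBall a R ⊆ ⋃ c ∈ s, closedBall c r := by
  have hsq1 := sqrt_ge_one hr hrR
  by_cases hr16 : 16 < r
  · refine ⟨{0}, by simpa using by linarith, ?_⟩
    rintro y ⟨hyA, -⟩
    have hy := A_subset hyA
    simp only [Finset.mem_singleton, Set.mem_iUnion, exists_prop]
    exact ⟨0, rfl, by
      simp only [mem_closedBall, Real.dist_eq]
      rw [abs_of_nonneg (by linarith [hy.1])]
      linarith [hy.2]⟩
  push_neg at hr16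
  -- choose scales m and k (opaque witnesses)
  have hexm : ∃ m, (1/16:ℝ)^m ≤ r := by
    obtain ⟨m, hm⟩ := exists_pow_lt_of_lt_one hr (by norm_num : (1/16:ℝ) < 1)
    exact ⟨m, hm.le⟩
  obtain ⟨m, hmle, hmgt, hmmin⟩ : ∃ m, (1/16:ℝ)^m ≤ r ∧ r ≤ 16 * (1/16:ℝ)^m ∧
      ∀ k, (1/16:ℝ)^k ≤ r → m ≤ k := by
    refine ⟨Nat.find hexm, Nat.find_spec hexm, ?_, fun k hk => Nat.find_le hk⟩
    rcases Nat.eq_zero_or_pos (Nat.find hexm) with h0 | hpos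
    · rw [h0]; norm_num; linarith
    · have hmin := Nat.find_min hexm (show Nat.find hexm - 1 < Nat.find hexm from
        Nat.sub_lt hpos one_pos)
      push_neg at hmin
      have h1 : Nat.find hexm - 1 + 1 = Nat.find hexm := Nat.succ_pred_eq_of_pos hpos
      have h2 : (1/16:ℝ)^(Nat.find hexm) = (1/16:ℝ)^(Nat.find hexm - 1) * (1/16) := by
        rw [← pow_succ, h1]
      linarith [hmin]
  have hexk : ∃ k, (1/16:ℝ)^k ≤ R := ⟨m, hmle.trans hrR.le⟩
  obtain ⟨k, hkle, hk32, hkm⟩ : ∃ k, (1/16:ℝ)^k ≤ R ∧ R ≤ 32 * (1/16:ℝ)^k ∧ k ≤ m := by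
    refine ⟨Nat.find hexk, Nat.find_spec hexk, ?_, Nat.find_le (hmle.trans hrR.le)⟩
    rcases Nat.eq_zero_or_pos (Nat.find hexk) with h0 | hpos
    · rw [h0]; norm_num; linarith
    · have hmin := Nat.find_min hexk (show Nat.find hexk - 1 < Nat.find hexk from
        Nat.sub_lt hpos one_pos)
      push_neg at hmin
      have h1 : Nat.find hexk - 1 + 1 = Nat.find hexk := Nat.succ_pred_eq_of_pos hpos
      have h2 : (1/16:ℝ)^(Nat.find hexk) = (1/16:ℝ)^(Nat.find hexk - 1) * (1/16) := by
        rw [← pow_succ, h1]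
      linarith [hmin]
  clear hexm hexk hmmin
  set μ : ℝ := (1/16:ℝ)^m with hμ
  set κ : ℝ := (1/16:ℝ)^k with hκ
  have hμpos : 0 < μ := by positivity
  have hκpos : 0 < κ := by positivity
  set δ : ℝ := 4 * κ with hδ
  have hδpos : 0 < δ := by positivity
  -- suffix finset
  set S : Finset ℝ := (Fintype.piFinset fun _ : Fin (m - k) => Finset.range 4).image
      (fun b => ∑ i : Fin (m-k), (b i : ℝ) * w (k + i)) with hS
  have hScard : (S.card : ℝ) ≤ 4 ^ (m - k) := by
    have h1 : S.card ≤ 4 ^ (m - k) := by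
      refine le_trans Finset.card_image_le ?_
      rw [Fintype.card_piFinset]
      simp
    exact_mod_cast h1
  set K₀ : ℤ := ⌈(a - R - μ - κ)/δ⌉ with hK₀
  set K0 : ℕ := K₀.toNat with hK0
  set Q : ℕ := ⌊(2*R + μ + κ)/δ⌋₊ + 1 with hQ
  refine ⟨(Finset.range Q ×ˢ S).image (fun p => δ * ((K0:ℝ) + p.1) + p.2), ?_, ?_⟩
  · -- cardinality bound
    have hQle : (Q:ℝ) ≤ 33 := by
      have h1 : ((⌊(2*R + μ + κ)/δ⌋₊ : ℕ) : ℝ) ≤ (2*R + μ + κ)/δ :=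
        Nat.floor_le (div_nonneg (by linarith) hδpos.le)
      have h2 : (2*R + μ + κ)/δ ≤ 32 := by
        rw [div_le_iff₀ hδpos]
        have : μ ≤ R := hmle.trans hrR.le
        linarith [hkle, hk32]
      have h3 : (Q:ℝ) = ((⌊(2*R + μ + κ)/δ⌋₊ : ℕ) : ℝ) + 1 := by
        rw [hQ]; push_cast; ring
      linarith
    have hpow : ((4:ℝ) ^ (m - k)) ≤ 4 * Real.sqrt (R / r) := by
      have h16 : (16:ℝ)^(m-k) = κ / μ := by
        rw [hκ, hμ, eq_div_iff (ne_of_gt hμpos)]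
        have hmk : (m - k) + k = m := Nat.sub_add_cancel hkm
        calc (16:ℝ)^(m-k) * (1/16)^m = (16:ℝ)^(m-k) * ((1/16)^(m-k) * (1/16)^k) := by
              rw [← pow_add, hmk]
          _ = ((16:ℝ) * (1/16))^(m-k) * (1/16)^k := by rw [mul_pow]; ring
          _ = (1/16:ℝ)^k := by norm_num
      have hle : κ / μ ≤ 16 * (R / r) := by
        rw [div_le_iff₀ hμpos]
        have h1 : κ ≤ R := hkle
        have h2 : r / 16 ≤ μ := by linarith
        calc κ ≤ R := h1
          _ = (R / r) * r := by field_simp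
          _ ≤ 16 * (R/r) * μ := by
              have hRr : 0 < R / r := div_pos (lt_trans hr hrR) hr
              nlinarith
      have hsq : ((4:ℝ) ^ (m-k))^2 = 16^(m-k) := by
        rw [← pow_mul, show (16:ℝ) = 4^2 by norm_num, ← pow_mul, Nat.mul_comm]
      have h4 : (4:ℝ)^(m-k) = Real.sqrt (16^(m-k)) := by
        rw [← hsq, Real.sqrt_sq (by positivity)]
      have hsqrt16 : Real.sqrt 16 = 4 := by
        rw [show (16:ℝ) = 4^2 by norm_num, Real.sqrt_sq (by norm_num : (0:ℝ) ≤ 4)]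
      rw [h4, h16]
      calc Real.sqrt (κ/μ) ≤ Real.sqrt (16 * (R/r)) := Real.sqrt_le_sqrt (by linarith)
        _ = 4 * Real.sqrt (R/r) := by
            rw [Real.sqrt_mul (by norm_num : (0:ℝ) ≤ 16), hsqrt16]
    have hcard1 : (((Finset.range Q ×ˢ S).image
        (fun p => δ * ((K0:ℝ) + p.1) + p.2)).card : ℝ) ≤ (Q:ℝ) * (S.card:ℝ) := by
      have h := Finset.card_image_le (s := Finset.range Q ×ˢ S)
        (f := fun p => δ * ((K0:ℝ) + p.1) + p.2)
      rw [Finset.card_product, Finset.card_range] at h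
      exact_mod_cast h
    have hSnn : (0:ℝ) ≤ (S.card : ℝ) := by positivity
    have hQnn : (0:ℝ) ≤ (Q : ℝ) := by positivity
    have hsqnn := Real.sqrt_nonneg (R/r)
    nlinarith [hcard1, hScard, hQle, hpow]
  · -- coverage
    rintro y ⟨hyA, hyball⟩
    rw [mem_closedBall, Real.dist_eq, abs_le] at hyball
    obtain ⟨b, hb3, h0le, hle⟩ := exists_prefix m hyA
    set x : ℝ := ∑ j ∈ Finset.range m, (b j : ℝ) * w j with hx
    set Kn : ℕ := ∑ j ∈ Finset.range k, b j * 16^(k-1-j) with hKn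
    set sval : ℝ := ∑ j ∈ Finset.Ico k m, (b j : ℝ) * w j with hsval
    have hxsplit : x = δ * (Kn : ℝ) + sval := by
      have h1 : x = (∑ j ∈ Finset.range k, (b j : ℝ) * w j) + sval := by
        have hcons := Finset.sum_Ico_consecutive (fun j => (b j:ℝ) * w j)
          (Nat.zero_le k) hkm
        rw [hx, hsval, Finset.range_eq_Ico, Finset.range_eq_Ico]
        exact hcons.symm
      have h2 : ∑ j ∈ Finset.range k, (b j : ℝ) * w j = δ * (Kn : ℝ) := by
        rw [hKn]
        push_cast
        rw [Finset.mul_sum]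
        refine Finset.sum_congr rfl fun j hj => ?_
        simp only [Finset.mem_range] at hj
        have hwj : w j = δ * (16:ℝ)^(k-1-j) := by
          rw [w, hδ, hκ]
          have hexp : (k - 1 - j) + (j+1) = k := by omega
          have hh : (1/16:ℝ)^k * (16:ℝ)^(k-1-j) = (1/16:ℝ)^(j+1) := by
            calc (1/16:ℝ)^k * (16:ℝ)^(k-1-j)
                = (1/16:ℝ)^((k-1-j)+(j+1)) * (16:ℝ)^(k-1-j) := by rw [hexp]
              _ = ((1/16:ℝ) * 16)^(k-1-j) * (1/16:ℝ)^(j+1) := by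
                  rw [pow_add, mul_pow]; ring
              _ = (1/16:ℝ)^(j+1) := by norm_num
          calc (1/4:ℝ) * (1/16)^j = 4 * (1/16:ℝ)^(j+1) := by rw [pow_succ]; ring
            _ = 4 * ((1/16:ℝ)^k * (16:ℝ)^(k-1-j)) := by rw [hh]
            _ = 4 * (1/16:ℝ)^k * (16:ℝ)^(k-1-j) := by ring
        rw [hwj]; push_cast; ring
      rw [h1, h2]
    have hsval_mem : sval ∈ S := by
      rw [hS, Finset.mem_image]
      refine ⟨fun i => b (k + i), ?_, ?_⟩
      · rw [Fintype.mem_piFinset]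
        intro i
        rw [Finset.mem_range]
        exact Nat.lt_succ_of_le (hb3 _)
      · rw [hsval, Finset.sum_Ico_eq_sum_range, ← Fin.sum_univ_eq_sum_range]
    have hsval_nonneg : 0 ≤ sval :=
      Finset.sum_nonneg fun j _ => mul_nonneg (by positivity) (w_nonneg j)
    have hsval_le : sval ≤ κ := by
      have h1 : sval ≤ ∑ j ∈ Finset.Ico k m, (3:ℝ) * w j :=
        Finset.sum_le_sum fun j _ => mul_le_mul_of_nonneg_right
          (by exact_mod_cast hb3 j) (w_nonneg j)
      have h2 := sum_w_tail k m
      rw [hsval]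
      calc ∑ j ∈ Finset.Ico k m, (b j : ℝ) * w j ≤ ∑ j ∈ Finset.Ico k m, (3:ℝ) * w j := h1
        _ ≤ (4/5) * (1/16)^k := h2
        _ ≤ κ := by
            have hp : (0:ℝ) < (1/16:ℝ)^k := by positivity
            rw [hκ]; linarith
    have hle' : y - x ≤ (4/5) * μ := by rw [hμ]; exact hle
    have hxlow : a - R - μ ≤ x := by linarith [hyball.1]
    have hxhigh : x ≤ a + R := by linarith [hyball.2]
    have hKnlow : (a - R - μ - κ)/δ ≤ (Kn:ℝ) := by
      rw [div_le_iff₀ hδpos]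
      linarith [hxsplit, hsval_le, hxlow]
    have hK0int : K₀ ≤ (Kn:ℤ) := Int.ceil_le.2 (by exact_mod_cast hKnlow)
    have hK0le : K0 ≤ Kn := Int.toNat_le.2 hK0int
    set q : ℕ := Kn - K0 with hq
    have hqreal : (q:ℝ) = (Kn:ℝ) - (K0:ℝ) := by
      rw [hq]
      push_cast [hK0le]
      ring
    have hc1 : (a-R-μ-κ)/δ ≤ (K₀:ℝ) := Int.le_ceil _
    have hc2 : (K₀:ℝ) ≤ ((K0:ℕ):ℝ) := by exact_mod_cast Int.self_le_toNat K₀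
    have hKnhigh : δ * (Kn:ℝ) ≤ a + R := by linarith [hxsplit, hsval_nonneg, hxhigh]
    have hK0low : a-R-μ-κ ≤ δ * ((K0:ℕ):ℝ) := by
      calc a-R-μ-κ = δ * ((a-R-μ-κ)/δ) := by field_simp
        _ ≤ δ * ((K0:ℕ):ℝ) :=
            mul_le_mul_of_nonneg_left (hc1.trans hc2) hδpos.le
    have h5 : (q:ℝ) ≤ (2*R+μ+κ)/δ := by
      rw [le_div_iff₀ hδpos]
      have hqd : (q:ℝ) * δ = δ * (Kn:ℝ) - δ * ((K0:ℕ):ℝ) := by rw [hqreal]; ring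
      linarith [hKnhigh, hK0low]
    have hqQ : q < Q := by
      have h6 : q ≤ ⌊(2*R+μ+κ)/δ⌋₊ := Nat.le_floor h5
      rw [hQ]
      exact Nat.lt_succ_of_le h6
    refine mem_iUnion₂.2 ⟨δ * ((K0:ℝ) + q) + sval, ?_, ?_⟩
    · exact Finset.mem_image.2 ⟨(q, sval),
        Finset.mem_product.2 ⟨Finset.mem_range.2 hqQ, hsval_mem⟩, rfl⟩
    · rw [mem_closedBall, Real.dist_eq]
      have hcq : δ * ((K0:ℝ) + (q:ℝ)) + sval = x := by
        rw [hqreal, hxsplit]; ring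
      rw [hcq, abs_le]
      constructor <;> linarith [h0le, hle', hmle]


lemma coverB (a R r : ℝ) (hr : 0 < r) (hrR : r < R) (hR : R ≤ 8) :
    ∃ s : Finset ℝ, (s.card : ℝ) ≤ 136 * Real.sqrt (R / r) ∧
      B ∩ closedBall a R ⊆ ⋃ c ∈ s, closedBall c r := by
  obtain ⟨s, hcard, hcov⟩ := coverA (-4*a) (4*R) (4*r) (by linarith) (by linarith) (by linarith)
  have h4 : (4*R)/(4*r) = R/r := by field_simp
  rw [h4] at hcard
  refine ⟨s.image (fun c => -c/4), le_trans (by exact_mod_cast Finset.card_image_le) hcard, ?_⟩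
  rintro x ⟨hxB, hxball⟩
  obtain ⟨y, hyA, rfl⟩ := hxB
  rw [mem_closedBall, Real.dist_eq] at hxball
  have hy4 : y ∈ A ∩ closedBall (-4*a) (4*R) := by
    refine ⟨hyA, ?_⟩
    rw [mem_closedBall, Real.dist_eq]
    have habs : |(-4:ℝ)| = 4 := by rw [abs_neg]; norm_num [abs_of_nonneg]
    rw [show y - (-4*a) = (-4) * ((-y/4) - a) by ring, abs_mul, habs]
    simp only at hxball
    linarith
  obtain ⟨c, hcs, hc⟩ := mem_iUnion₂.1 (hcov hy4)
  refine mem_iUnion₂.2 ⟨-c/4, Finset.mem_image_of_mem _ hcs, ?_⟩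
  rw [mem_closedBall, Real.dist_eq] at hc ⊢
  have habs : |(-(1:ℝ)/4)| = 1/4 := by rw [abs_div, abs_neg]; norm_num [abs_of_nonneg]
  rw [show (-y/4) - (-c/4) = (-(1:ℝ)/4) * (y - c) by ring, abs_mul, habs]
  linarith

lemma coverF (a R r : ℝ) (hr : 0 < r) (hrR : r < R) (hR : R ≤ 4) :
    ∃ s : Finset ℝ, (s.card : ℝ) ≤ 416 * Real.sqrt (R / r) ∧
      F ∩ closedBall a R ⊆ ⋃ c ∈ s, closedBall c r := by
  obtain ⟨s1, hc1, hcov1⟩ := coverA a (2*R) r hr (by linarith) (by linarith)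
  obtain ⟨s2, hc2, hcov2⟩ := coverB a (2*R) r hr (by linarith) (by linarith)
  refine ⟨s1 ∪ s2, ?_, ?_⟩
  · have hsqrt2 : Real.sqrt (2*R/r) ≤ 1.5 * Real.sqrt (R/r) := by
      have h1 : 2*R/r = 2 * (R/r) := by ring
      rw [h1, Real.sqrt_mul (by norm_num : (0:ℝ) ≤ 2)]
      have h2 : Real.sqrt 2 ≤ 1.5 := by
        have h3 := Real.sqrt_le_sqrt (by norm_num : (2:ℝ) ≤ 2.25)
        rwa [show (2.25:ℝ) = 1.5^2 by norm_num, Real.sqrt_sq (by norm_num : (0:ℝ) ≤ 1.5)] at h3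
      exact mul_le_mul_of_nonneg_right h2 (Real.sqrt_nonneg _)
    calc ((s1 ∪ s2).card : ℝ) ≤ (s1.card : ℝ) + (s2.card : ℝ) := by
          exact_mod_cast Finset.card_union_le s1 s2
      _ ≤ 272 * Real.sqrt (2*R/r) := by linarith
      _ ≤ 416 * Real.sqrt (R/r) := by nlinarith [Real.sqrt_nonneg (R/r), hsqrt2]
  · -- F ∩ ball ⊆ closure((A∪B) ∩ ball a 2R) ⊆ union of balls
    have hcl : F ∩ closedBall a R ⊆ closure ((A ∪ B) ∩ ball a (2*R)) := by
      rintro x ⟨hxF0, hxball⟩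
      have hxF : x ∈ closure (A ∪ B) := hxF0
      rw [Metric.mem_closure_iff] at hxF ⊢
      intro ε hε
      obtain ⟨y, hy, hdy⟩ := hxF (min ε R) (lt_min hε (by linarith))
      refine ⟨y, ⟨hy, ?_⟩, lt_of_lt_of_le hdy (min_le_left _ _)⟩
      rw [mem_ball]
      have h1 : dist y x < R := by
        rw [dist_comm]; exact lt_of_lt_of_le hdy (min_le_right _ _)
      have h2 : dist x a ≤ R := mem_closedBall.1 hxball
      calc dist y a ≤ dist y x + dist x a := dist_triangle _ _ _
        _ < 2*R := by linarith
    have hcov : (A ∪ B) ∩ ball a (2*R) ⊆ ⋃ c ∈ (s1 ∪ s2 : Finset ℝ), closedBall c r := by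
      rintro x ⟨hxAB, hxball⟩
      have hxcb : x ∈ closedBall a (2*R) := ball_subset_closedBall hxball
      rcases hxAB with hA | hB
      · obtain ⟨c, hcs, hc⟩ := mem_iUnion₂.1 (hcov1 ⟨hA, hxcb⟩)
        exact mem_iUnion₂.2 ⟨c, Finset.mem_union_left _ hcs, hc⟩
      · obtain ⟨c, hcs, hc⟩ := mem_iUnion₂.1 (hcov2 ⟨hB, hxcb⟩)
        exact mem_iUnion₂.2 ⟨c, Finset.mem_union_right _ hcs, hc⟩
    intro x hx
    have hclosed : IsClosed (⋃ c ∈ (s1 ∪ s2 : Finset ℝ), closedBall c r) :=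
      (s1 ∪ s2).finite_toSet.isClosed_biUnion fun c _ => isClosed_closedBall
    exact closure_minimal hcov hclosed (hcl hx)

lemma coverIcc (x0 R r : ℝ) (hr : 0 < r) (hR : 0 ≤ R) :
    ∃ s : Finset ℝ, (s.card : ℝ) ≤ R/r + 1 ∧
      closedBall x0 R ⊆ ⋃ c ∈ s, closedBall c r := by
  set Q : ℕ := ⌊R/r⌋₊ + 1 with hQ
  refine ⟨(Finset.range Q).image (fun i : ℕ => x0 - R + r + 2*r*(i:ℝ)), ?_, ?_⟩
  · calc (((Finset.range Q).image (fun i : ℕ => x0 - R + r + 2*r*(i:ℝ))).card : ℝ)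
        ≤ ((Finset.range Q).card : ℝ) := by exact_mod_cast Finset.card_image_le
      _ = (Q : ℝ) := by rw [Finset.card_range]
      _ ≤ R/r + 1 := by
          rw [hQ]; push_cast
          have := Nat.floor_le (div_nonneg hR hr.le)
          linarith
  · intro y hy
    rw [mem_closedBall, Real.dist_eq, abs_le] at hy
    set i : ℕ := ⌊(y - (x0 - R))/(2*r)⌋₊ with hi
    have hu0 : 0 ≤ y - (x0 - R) := by linarith [hy.1]
    have hiQ : i < Q := by
      rw [hQ]
      have h1 : i ≤ ⌊R/r⌋₊ := by
        apply Nat.floor_le_floor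
        rw [div_le_div_iff₀ (by linarith : (0:ℝ) < 2*r) hr]
        nlinarith [hy.2]
      exact Nat.lt_succ_of_le h1
    refine mem_iUnion₂.2 ⟨x0 - R + r + 2*r*(i:ℝ),
      Finset.mem_image_of_mem _ (Finset.mem_range.2 hiQ), ?_⟩
    rw [mem_closedBall, Real.dist_eq, abs_le]
    have h2 : (i:ℝ) ≤ (y - (x0 - R))/(2*r) := Nat.floor_le (by positivity)
    have h3 : (y - (x0 - R))/(2*r) < (i:ℝ) + 1 := Nat.lt_floor_add_one _
    have h2r := (le_div_iff₀ (by positivity : (0:ℝ) < 2*r)).1 h2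
    have h3r := (div_lt_iff₀ (by positivity : (0:ℝ) < 2*r)).1 h3
    have h4 : 2*r*(i:ℝ) ≤ y - (x0 - R) := by linarith
    have h5 : y - (x0 - R) < 2*r*((i:ℝ)+1) := by linarith
    constructor <;> nlinarith

lemma coverPi {n : ℕ} (Aset : Fin n → Set ℝ) (s : Fin n → Finset ℝ) (r : ℝ) (hr : 0 ≤ r)
    (h : ∀ i, Aset i ⊆ ⋃ c ∈ s i, closedBall c r) :
    Set.pi univ Aset ⊆ ⋃ c ∈ Fintype.piFinset s, closedBall c r := by
  intro y hy
  have hchoice : ∀ i, ∃ c, c ∈ s i ∧ y i ∈ closedBall c r := by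
    intro i
    obtain ⟨c, hc1, hc2⟩ := mem_iUnion₂.1 (h i (hy i (mem_univ i)))
    exact ⟨c, hc1, hc2⟩
  choose c hcs hcball using hchoice
  refine mem_iUnion₂.2 ⟨c, Fintype.mem_piFinset.2 hcs, ?_⟩
  rw [mem_closedBall]
  rw [dist_pi_le_iff hr]
  intro i
  exact hcball i


lemma exists_pair {t : ℝ} (ht : t ∈ Ioo (0:ℝ) 1) :
    ∃ u, u ∈ closure A ∧ (u - t) ∈ closure B ∧ u ∈ Icc (0:ℝ) 1 := by
  obtain ⟨ht0, ht1⟩ := ht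
  -- digits of t in base 4
  set N : ℕ → ℕ := fun M => ⌊t * 4^M⌋₊ with hN
  have hNfl : ∀ M, (N M : ℝ) ≤ t * 4^M := fun M => Nat.floor_le (by positivity)
  have hNfl' : ∀ M, t * 4^M < (N M : ℝ) + 1 := fun M => Nat.lt_floor_add_one _
  have hNle : ∀ i, 4 * N i ≤ N (i+1) := by
    intro i
    apply Nat.le_floor
    push_cast
    have h1 := hNfl i
    have : t * 4^(i+1) = 4 * (t * 4^i) := by rw [pow_succ]; ring
    rw [this]
    linarith
  have hNd : ∀ i, N (i+1) ≤ 4 * N i + 3 := by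
    intro i
    have h2 := hNfl' i
    have h3 : (N (i+1) : ℝ) ≤ t * 4^(i+1) := hNfl (i+1)
    have h4 : t * 4^(i+1) = 4 * (t * 4^i) := by rw [pow_succ]; ring
    have : (N (i+1) : ℝ) < 4 * ((N i : ℝ) + 1) := by rw [h4] at h3; linarith
    have : (N (i+1) : ℝ) < (4 * N i + 4 : ℕ) := by push_cast; linarith
    have := Nat.cast_lt.mp this
    omega
  set d : ℕ → ℕ := fun i => N (i+1) - 4 * N i with hd
  have hd3 : ∀ i, d i ≤ 3 := fun i => by
    have := hNle i; have := hNd i; simp only [hd]; omega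
  have hdcast : ∀ i, (d i : ℝ) = (N (i+1) : ℝ) - 4 * (N i : ℝ) := by
    intro i
    have := hNle i
    simp only [hd]
    push_cast [Nat.cast_sub this]
    ring
  have hN0 : N 0 = 0 := by
    simp only [hN, pow_zero, mul_one]
    exact Nat.floor_eq_zero.2 ht1
  have hpartial : ∀ M, ∑ i ∈ Finset.range M, (d i : ℝ) * (1/4)^(i+1)
      = (N M : ℝ) / 4^M := by
    intro M
    induction M with
    | zero => simp [hN0]
    | succ M ih =>
        rw [Finset.sum_range_succ, ih, hdcast M]
        rw [one_div_pow]
        field_simp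
        ring
  -- the two half sums
  have hsum2 : ∀ m, (∑ j ∈ Finset.range m, (d (2*j) : ℝ) * w j)
      + (∑ j ∈ Finset.range m, (d (2*j+1) : ℝ) * w j) / 4 = (N (2*m) : ℝ) / 4^(2*m) := by
    intro m
    rw [← hpartial (2*m)]
    induction m with
    | zero => simp
    | succ m ih =>
        rw [Finset.sum_range_succ, Finset.sum_range_succ (f := fun j => (d (2*j+1) : ℝ) * w j),
          show 2*(m+1) = (2*m+1)+1 by ring, Finset.sum_range_succ, Finset.sum_range_succ]
        have hw1 : w m = (1/4:ℝ)^(2*m+1) := by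
          have h : (1/4:ℝ)^(2*m+1) = ((1/4:ℝ)^2)^m * (1/4) := by rw [pow_succ, pow_mul]
          rw [w, h]; norm_num; ring
        rw [← ih, hw1]
        ring
  have A_subset' : A ⊆ Icc 0 (4/5) := by
    rintro x ⟨m, a, ha, rfl⟩
    constructor
    · exact Finset.sum_nonneg fun j _ => mul_nonneg (by positivity) (w_nonneg j)
    · calc ∑ j ∈ Finset.range m, (a j : ℝ) * w j
          ≤ ∑ j ∈ Finset.Ico 0 m, (3:ℝ) * w j := by
            rw [Finset.range_eq_Ico]
            exact Finset.sum_le_sum fun j _ => mul_le_mul_of_nonneg_right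
              (by exact_mod_cast ha j) (w_nonneg j)
        _ ≤ (4/5) * (1/16)^0 := sum_w_tail 0 m
        _ = 4/5 := by norm_num
  set um : ℕ → ℝ := fun m => ∑ j ∈ Finset.range m, (d (2*j) : ℝ) * w j with hum
  have humA : ∀ m, um m ∈ A := fun m => ⟨m, fun j => d (2*j), fun j => hd3 _, rfl⟩
  have hum_mono : Monotone um := monotone_nat_of_le_succ (fun m => by
    show (∑ j ∈ Finset.range m, (d (2*j) : ℝ) * w j)
      ≤ ∑ j ∈ Finset.range (m+1), (d (2*j) : ℝ) * w j
    rw [Finset.sum_range_succ]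
    have : 0 ≤ (d (2*m):ℝ) * w m := mul_nonneg (by positivity) (w_nonneg m)
    linarith)
  have hbdd : BddAbove (Set.range um) := by
    refine ⟨4/5, ?_⟩
    rintro _ ⟨m, rfl⟩
    exact (A_subset' (humA m)).2
  set u := ⨆ m, um m with hu
  have htend_u : Tendsto um atTop (𝓝 u) := tendsto_atTop_ciSup hum_mono hbdd
  have huA : u ∈ closure A := mem_closure_of_tendsto htend_u (Eventually.of_forall humA)
  -- N(2m)/4^(2m) → t
  have h2m : Tendsto (fun m : ℕ => 2*m) atTop atTop :=
    StrictMono.tendsto_atTop (fun a b hab => by omega)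
  have h14 : Tendsto (fun M : ℕ => (1/4:ℝ)^M) atTop (𝓝 0) :=
    tendsto_pow_atTop_nhds_zero_of_lt_one (by norm_num) (by norm_num)
  have htendg : Tendsto (fun m => (N (2*m) : ℝ)/4^(2*m)) atTop (𝓝 t) := by
    have hup : ∀ M, (N M:ℝ)/4^M ≤ t := by
      intro M
      rw [div_le_iff₀ (by positivity : (0:ℝ) < 4^M)]
      exact hNfl M
    have hlo : ∀ M, t - (1/4:ℝ)^M ≤ (N M:ℝ)/4^M := by
      intro M
      have h1 := hNfl' M
      have h2 : (1/4:ℝ)^M = 1/4^M := one_div_pow 4 M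
      rw [sub_le_iff_le_add, h2]
      rw [← add_div, le_div_iff₀ (by positivity : (0:ℝ) < 4^M)]
      linarith
    have hlotend : Tendsto (fun m : ℕ => t - (1/4:ℝ)^(2*m)) atTop (𝓝 t) := by
      have := tendsto_const_nhds (x := t) (f := atTop (α := ℕ)) |>.sub (h14.comp h2m)
      simpa using this
    exact tendsto_of_tendsto_of_tendsto_of_le_of_le hlotend tendsto_const_nhds
      (fun m => hlo (2*m)) (fun m => hup (2*m))
  have htendy : Tendsto (fun m => ∑ j ∈ Finset.range m, (d (2*j+1):ℝ) * w j) atTop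
      (𝓝 (4*(t - u))) := by
    have heq : (fun m => ∑ j ∈ Finset.range m, (d (2*j+1):ℝ) * w j)
        = fun m => 4*((N (2*m):ℝ)/4^(2*m) - um m) := by
      funext m
      have h := hsum2 m
      show (∑ j ∈ Finset.range m, (d (2*j+1):ℝ) * w j)
        = 4*((N (2*m):ℝ)/4^(2*m) - ∑ j ∈ Finset.range m, (d (2*j) : ℝ) * w j)
      linarith
    rw [heq]
    exact (htendg.sub htend_u).const_mul 4
  have hvB : (u - t) ∈ closure B := by
    have htendv : Tendsto
        (fun m => -(∑ j ∈ Finset.range m, (d (2*j+1):ℝ) * w j)/4) atTop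
        (𝓝 (-(4*(t-u))/4)) := (htendy.neg).div_const 4
    have heq2 : -(4*(t-u))/4 = u - t := by ring
    rw [heq2] at htendv
    refine mem_closure_of_tendsto htendv (Eventually.of_forall fun m => ?_)
    exact ⟨∑ j ∈ Finset.range m, (d (2*j+1):ℝ) * w j,
      ⟨m, fun j => d (2*j+1), fun j => hd3 _, rfl⟩, rfl⟩
  refine ⟨u, huA, hvB, ?_, ?_⟩
  · have h0 : um 0 ≤ u := le_ciSup hbdd 0
    have : um 0 = 0 := by simp [hum]
    linarith
  · exact le_trans (ciSup_le fun m => (A_subset' (humA m)).2) (by norm_num)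

def G (n : ℕ) : Set (Fin n → ℝ) :=
  {y | (∀ i, y i ∈ Icc (-2:ℝ) 2) ∧ ∃ i, y i ∈ F}

lemma F_subset : F ⊆ Icc (-1:ℝ) 1 := by
  apply closure_minimal _ isClosed_Icc
  rintro x (hx | ⟨y, hy, rfl⟩)
  · have := A_subset hx
    exact ⟨by linarith [this.1], by linarith [this.2]⟩
  · have := A_subset hy
    constructor <;> simp only <;> [linarith [this.2]; linarith [this.1]]

lemma G_isCompact (n : ℕ) : IsCompact (G n) := by
  have hGeq : G n = (Set.pi univ fun _ => Icc (-2:ℝ) 2)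
      ∩ ⋃ i, (fun y : Fin n → ℝ => y i) ⁻¹' F := by
    ext y
    constructor
    · rintro ⟨h1, i, hi⟩
      exact ⟨fun j _ => h1 j, mem_iUnion.2 ⟨i, hi⟩⟩
    · rintro ⟨h1, h2⟩
      obtain ⟨i, hi⟩ := mem_iUnion.1 h2
      exact ⟨fun j => h1 j (mem_univ j), ⟨i, hi⟩⟩
  have hclosed : IsClosed (G n) := by
    rw [hGeq]
    exact (isClosed_set_pi fun i _ => isClosed_Icc).inter
      (isClosed_iUnion_of_finite fun i => (isClosed_closure).preimage (continuous_apply i))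
  exact IsCompact.of_isClosed_subset (isCompact_univ_pi fun i => isCompact_Icc)
    hclosed (fun y hy => by intro i _; exact hy.1 i)

lemma G_dist_le {n : ℕ} {x y : Fin n → ℝ} (hx : x ∈ G n) (hy : y ∈ G n) : dist y x ≤ 4 := by
  rw [dist_pi_le_iff (by norm_num : (0:ℝ) ≤ 4)]
  intro i
  have h1 := hx.1 i
  have h2 := hy.1 i
  rw [Real.dist_eq, abs_le]
  exact ⟨by linarith [h1.2, h2.1], by linarith [h1.1, h2.2]⟩

lemma assouad_G (n : ℕ) (hn : 2 ≤ n) (ε : ℝ) (hε : 0 < ε) :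
    assouadDim (G n) ≤ (n : ℝ) - 1/2 + ε := by
  have hn1 : (1:ℝ) ≤ n := by exact_mod_cast Nat.one_le_of_lt hn
  have hs0 : (0:ℝ) ≤ (n : ℝ) - 1/2 + ε := by linarith
  apply csInf_le ⟨0, fun s hs => hs.1⟩
  set C : ℝ := (n:ℝ) * 416 * 2^n with hC
  have hC1 : 1 ≤ C := by
    rw [hC]
    have h2 : (1:ℝ) ≤ 2^n := one_le_pow₀ (by norm_num)
    nlinarith
  refine ⟨hs0, C, by linarith, ?_⟩
  intro x hx R hR r hr hrR
  set s0 : ℝ := (n : ℝ) - 1/2 + ε with hs0def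
  have hRr1 : (1:ℝ) ≤ R / r := (one_le_div hr).2 hrR.le
  have hrp1 : (1:ℝ) ≤ (R/r) ^ s0 := by
    calc (1:ℝ) = 1 ^ s0 := (Real.one_rpow _).symm
      _ ≤ (R/r) ^ s0 := Real.rpow_le_rpow (by norm_num) hRr1 hs0
  by_cases hr4 : 4 ≤ r
  · -- one-ball cover
    have hcov : G n ∩ closedBall x R ⊆ ⋃ c ∈ ({x} : Finset (Fin n → ℝ)), closedBall c r := by
      rintro y ⟨hyG, -⟩
      refine mem_iUnion₂.2 ⟨x, Finset.mem_singleton_self x, ?_⟩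
      rw [mem_closedBall]
      exact le_trans (G_dist_le hx hyG) (by linarith)
    have h1 := coverNum_le_card _ hcov
    have h2 : (coverNum (G n ∩ closedBall x R) r : ℝ) ≤ 1 := by exact_mod_cast h1
    nlinarith
  push_neg at hr4
  set R' : ℝ := min R 4 with hR'
  have hrR' : r < R' := lt_min hrR hr4
  have hR'4 : R' ≤ 4 := min_le_right _ _
  have hR'R : R' ≤ R := min_le_left _ _
  have hR'pos : 0 < R' := lt_trans hr hrR'
  -- covers of the slabs
  have hFcov : ∀ i : Fin n, ∃ sF : Finset ℝ, (sF.card : ℝ) ≤ 416 * Real.sqrt (R'/r) ∧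
      F ∩ closedBall (x i) R' ⊆ ⋃ c ∈ sF, closedBall c r := fun i =>
    coverF (x i) R' r hr hrR' hR'4
  have hIcov : ∀ j : Fin n, ∃ sI : Finset ℝ, (sI.card : ℝ) ≤ R'/r + 1 ∧
      closedBall (x j) R' ⊆ ⋃ c ∈ sI, closedBall c r := fun j =>
    coverIcc (x j) R' r hr hR'pos.le
  choose sF hsFcard hsFcov using hFcov
  choose sI hsIcard hsIcov using hIcov
  set sfun : Fin n → Fin n → Finset ℝ := fun i j => if j = i then sF i else sI j with hsfun
  set Aset : Fin n → Fin n → Set ℝ := fun i j =>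
    if j = i then F ∩ closedBall (x j) R' else closedBall (x j) R' with hAset
  have hTcov : ∀ i, Set.pi univ (Aset i) ⊆
      ⋃ c ∈ Fintype.piFinset (sfun i), closedBall c r := by
    intro i
    apply coverPi _ _ _ hr.le
    intro j
    simp only [hsfun, hAset]
    by_cases hji : j = i
    · simp only [hji, if_pos rfl]; exact hsFcov i
    · simp only [if_neg hji]; exact hsIcov j
  set bigs : Finset (Fin n → ℝ) := Finset.univ.biUnion (fun i => Fintype.piFinset (sfun i))
    with hbigs
  have hcov : G n ∩ closedBall x R ⊆ ⋃ c ∈ bigs, closedBall c r := by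
    rintro y ⟨hyG, hyball⟩
    have hyb' : y ∈ closedBall x R' := by
      rw [mem_closedBall]
      exact le_min (mem_closedBall.1 hyball) (G_dist_le hx hyG)
    obtain ⟨i0, hi0⟩ := hyG.2
    have hyT : y ∈ Set.pi univ (Aset i0) := by
      intro j _
      have hdj : y j ∈ closedBall (x j) R' :=
        mem_closedBall.2 ((dist_le_pi_dist y x j).trans (mem_closedBall.1 hyb'))
      simp only [hAset]
      by_cases hji : j = i0
      · rw [if_pos hji]
        exact ⟨hji ▸ hi0, hdj⟩
      · rw [if_neg hji]
        exact hdj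
    obtain ⟨c, hc1, hc2⟩ := mem_iUnion₂.1 (hTcov i0 hyT)
    exact mem_iUnion₂.2 ⟨c, Finset.mem_biUnion.2 ⟨i0, Finset.mem_univ _, hc1⟩, hc2⟩
  -- cardinality
  have hy1 : 1 ≤ R'/r := (one_le_div hr).2 hrR'.le
  have hy0 : 0 < R'/r := by linarith
  have hpercard : ∀ i, ((Fintype.piFinset (sfun i)).card : ℝ)
      ≤ 416 * Real.sqrt (R'/r) * (2*(R'/r))^(n-1) := by
    intro i
    have h2 : ((Fintype.piFinset (sfun i)).card : ℝ) = ∏ j, ((sfun i j).card : ℝ) := by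
      rw [Fintype.card_piFinset]
      push_cast
      rfl
    rw [h2, ← Finset.mul_prod_erase Finset.univ _ (Finset.mem_univ i)]
    have hii : ((sfun i i).card : ℝ) ≤ 416 * Real.sqrt (R'/r) := by
      simp only [hsfun, if_pos rfl]
      exact hsFcard i
    have hprod : (∏ j ∈ Finset.univ.erase i, ((sfun i j).card : ℝ)) ≤ (2*(R'/r))^(n-1) := by
      have hb : ∀ j ∈ Finset.univ.erase i, ((sfun i j).card : ℝ) ≤ 2*(R'/r) := by
        intro j hj
        have hji : j ≠ i := (Finset.mem_erase.1 hj).1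
        simp only [hsfun, if_neg hji]
        linarith [hsIcard j]
      calc ∏ j ∈ Finset.univ.erase i, ((sfun i j).card:ℝ)
          ≤ ∏ _j ∈ Finset.univ.erase i, (2*(R'/r)) :=
            Finset.prod_le_prod (fun j _ => by positivity) hb
        _ = (2*(R'/r))^(n-1) := by
            rw [Finset.prod_const, Finset.card_erase_of_mem (Finset.mem_univ i),
              Finset.card_univ, Fintype.card_fin]
    exact mul_le_mul hii hprod
      (Finset.prod_nonneg fun j _ => by positivity) (by positivity)
  have hcard : (bigs.card : ℝ) ≤ (n:ℝ) * (416 * Real.sqrt (R'/r) * (2*(R'/r))^(n-1)) := by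
    calc (bigs.card : ℝ) ≤ ∑ i, ((Fintype.piFinset (sfun i)).card : ℝ) := by
          exact_mod_cast Finset.card_biUnion_le
      _ ≤ ∑ _i : Fin n, (416 * Real.sqrt (R'/r) * (2*(R'/r))^(n-1)) :=
          Finset.sum_le_sum (fun i _ => hpercard i)
      _ = (n:ℝ) * (416 * Real.sqrt (R'/r) * (2*(R'/r))^(n-1)) := by
          rw [Finset.sum_const, Finset.card_univ, Fintype.card_fin, nsmul_eq_mul]
  -- conclude
  have hcN := coverNum_le_card bigs hcov
  have hcNR : (coverNum (G n ∩ closedBall x R) r : ℝ) ≤ (bigs.card : ℝ) := by exact_mod_cast hcN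
  have e1 : Real.sqrt (R'/r) * (R'/r)^(n-1) = (R'/r) ^ ((n:ℝ) - 1/2) := by
    rw [Real.sqrt_eq_rpow, ← Real.rpow_natCast (R'/r) (n-1), ← Real.rpow_add hy0]
    congr 1
    have hcast : ((n-1 : ℕ):ℝ) = (n:ℝ) - 1 := by
      have h1 : (1:ℕ) ≤ n := by omega
      push_cast [h1]
      ring
    rw [hcast]
    ring
  have e2 : (R'/r) ^ ((n:ℝ) - 1/2) ≤ (R'/r) ^ s0 :=
    Real.rpow_le_rpow_of_exponent_le hy1 (by rw [hs0def]; linarith)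
  have e3 : (R'/r) ^ s0 ≤ (R/r) ^ s0 :=
    Real.rpow_le_rpow hy0.le (by gcongr) hs0
  have e4 : Real.sqrt (R'/r) * (R'/r)^(n-1) ≤ (R/r) ^ s0 := by
    rw [e1]; exact e2.trans e3
  have hpow2 : (2:ℝ)^(n-1) ≤ 2^n := pow_le_pow_right₀ (by norm_num) (by omega)
  calc (coverNum (G n ∩ closedBall x R) r : ℝ)
      ≤ (n:ℝ) * (416 * Real.sqrt (R'/r) * (2*(R'/r))^(n-1)) := hcNR.trans hcard
    _ = (n:ℝ) * 416 * 2^(n-1) * (Real.sqrt (R'/r) * (R'/r)^(n-1)) := by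
        rw [mul_pow]; ring
    _ ≤ (n:ℝ) * 416 * 2^n * ((R/r) ^ s0) := by
        have hnn : (0:ℝ) ≤ (n:ℝ) * 416 := by positivity
        exact mul_le_mul (mul_le_mul_of_nonneg_left hpow2 hnn) e4
          (by positivity) (by positivity)
    _ = C * (R/r) ^ s0 := by rw [hC]

end CubePack

open CubePack in
/-- For every `ε > 0` and `n ≥ 2` there is a compact set of Assouad
dimension at most `n - 1/2 + ε` containing boundaries of axis-aligned cubes of every
side length in `(0,1)`. -/
theorem exists_compact_assouad_cube_packing (ε : ℝ) (hε : 0 < ε) (n : ℕ) (hn : 2 ≤ n) :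
    ∃ G : Set (Fin n → ℝ), IsCompact G ∧ assouadDim G ≤ (n : ℝ) - 1/2 + ε ∧
      ∀ t ∈ Set.Ioo (0:ℝ) 1, ∃ c : Fin n → ℝ, {y : Fin n → ℝ | ‖y - c‖ = t / 2} ⊆ G := by
  refine ⟨G n, G_isCompact n, assouad_G n hn ε hε, ?_⟩
  intro t ht
  obtain ⟨u, huA, huB, hu01⟩ := exists_pair ht
  obtain ⟨ht0, ht1⟩ := ht
  set c : Fin n → ℝ := fun _ => u - t/2 with hc
  refine ⟨c, ?_⟩
  intro y hy
  simp only [mem_setOf_eq] at hy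
  have hcoord : ∀ i, |y i - (u - t/2)| ≤ t/2 := by
    intro i
    have h1 : ‖(y - c) i‖ ≤ ‖y - c‖ := norm_le_pi_norm _ i
    rw [hy] at h1
    simpa [hc, Real.norm_eq_abs] using h1
  constructor
  · intro i
    have := hcoord i
    rw [abs_le] at this
    constructor
    · have := this.1; have := hu01.1; nlinarith [this]
    · have := this.2; have := hu01.2; nlinarith [this]
  · -- some coordinate attains the sup norm
    have hne : (Finset.univ : Finset (Fin n)).Nonempty := by
      have : Nonempty (Fin n) := ⟨⟨0, by omega⟩⟩
      exact Finset.univ_nonempty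
    obtain ⟨i, -, hi⟩ := Finset.exists_mem_eq_sup Finset.univ hne
      (fun i => ‖(y - c) i‖₊)
    have hnorm : ‖y - c‖ = ‖(y - c) i‖ := by
      rw [Pi.norm_def, hi]
      rfl
    have habs0 : ‖(y - c) i‖ = t/2 := by rw [← hnorm, hy]
    have habs : |y i - (u - t/2)| = t/2 := by
      simpa [hc, Real.norm_eq_abs] using habs0
    refine ⟨i, ?_⟩
    rcases abs_eq (by linarith : (0:ℝ) ≤ t/2) |>.1 habs with h | h
    · have : y i = u := by linarith
      rw [this]
      exact closure_mono subset_union_left huA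
    · have : y i = u - t := by linarith
      rw [this]
      exact closure_mono subset_union_right huB
end

section
/- Let f : (0,1) → [0,1]^2 be Borel measurable, and for r ∈ (0,1) define G_r = ⋃_{t ∈ (0,1)} {y ∈ ℝ^2 : ‖y − f(t)‖_∞ = rt/2}. Then for Lebesgue-almost every r ∈ (0,1), the Hausdorff dimension of G_r is 2. -/
open Set MeasureTheory ENNReal

noncomputable def ker (s : ℝ) (x : ℝ) : ℝ≥0∞ := (‖x‖₊ : ℝ≥0∞) ^ (-s)

lemma ker_neg (s x : ℝ) : ker s (-x) = ker s x := by simp [ker]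

lemma ker_eq_ofReal {s x : ℝ} (hx : x ≠ 0) : ker s x = ENNReal.ofReal (|x| ^ (-s)) := by
  rw [ker, ← enorm_eq_nnnorm, ← ENNReal.ofReal_rpow_of_pos (abs_pos.2 hx), Real.enorm_eq_ofReal_abs]

lemma ker_meas (s : ℝ) : Measurable (ker s) :=
  (measurable_nnnorm.comp measurable_id).coe_nnreal_ennreal.pow_const _

lemma ker_anti {s : ℝ} (hs : 0 < s) {x y : ℝ} (h : |x| ≤ |y|) : ker s y ≤ ker s x := by
  rw [ker, ker, ENNReal.rpow_neg, ENNReal.rpow_neg]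
  apply ENNReal.inv_le_inv.2
  apply ENNReal.rpow_le_rpow _ hs.le
  rw [← enorm_eq_nnnorm, ← enorm_eq_nnnorm, Real.enorm_eq_ofReal_abs, Real.enorm_eq_ofReal_abs]
  exact ENNReal.ofReal_le_ofReal h

lemma half_lintegral {s L : ℝ} (hs1 : s < 1) (hL : 0 < L) :
    ∫⁻ u in Set.Ioc 0 L, ker s u ∂volume ≤ ENNReal.ofReal (L ^ (1 - s) / (1 - s)) := by
  have h1 : ∫⁻ u in Set.Ioc 0 L, ker s u ∂volume
      = ∫⁻ u in Set.Ioc 0 L, ENNReal.ofReal (u ^ (-s)) ∂volume := by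
    refine setLIntegral_congr_fun measurableSet_Ioc (fun u hu => ?_)
    rw [ker_eq_ofReal (ne_of_gt hu.1), abs_of_pos hu.1]
  have hint : IntegrableOn (fun u : ℝ => u ^ (-s)) (Set.Ioc 0 L) volume := by
    rw [← intervalIntegrable_iff_integrableOn_Ioc_of_le hL.le]
    exact intervalIntegral.intervalIntegrable_rpow' (by linarith)
  rw [h1, ← ofReal_integral_eq_lintegral_ofReal hint ?_]
  · apply ENNReal.ofReal_le_ofReal
    rw [← intervalIntegral.integral_of_le hL.le]
    rw [integral_rpow (Or.inl (by linarith))]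
    rw [Real.zero_rpow (by linarith : -s + 1 ≠ 0)]
    rw [show -s + 1 = 1 - s by ring]
    simp
  · filter_upwards [self_mem_ae_restrict measurableSet_Ioc] with u hu
    exact Real.rpow_nonneg hu.1.le _

lemma sym_lintegral {s L : ℝ} (hs1 : s < 1) (hL : 0 < L) :
    ∫⁻ u in Set.Icc (-L) L, ker s u ∂volume ≤ ENNReal.ofReal (2 * (L ^ (1 - s) / (1 - s))) := by
  have hneg : ∫⁻ u in Set.Icc (-L) 0, ker s u ∂volume
      = ∫⁻ u in Set.Icc 0 L, ker s u ∂volume := by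
    conv_lhs => rw [← Measure.map_neg_eq_self (volume : Measure ℝ)]
    rw [Measure.restrict_map measurable_neg measurableSet_Icc,
      lintegral_map (ker_meas s) measurable_neg]
    have hpre : (Neg.neg ⁻¹' Set.Icc (-L) (0:ℝ)) = Set.Icc 0 L := by
      ext x
      simp only [Set.mem_preimage, Set.mem_Icc]
      constructor <;> (intro h; exact ⟨by linarith [h.1, h.2], by linarith [h.1, h.2]⟩)
    rw [hpre]
    exact setLIntegral_congr_fun measurableSet_Icc (fun u _ => ker_neg s u)
  have h0 : ∫⁻ u in Set.Icc (0:ℝ) L, ker s u ∂volume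
      ≤ ENNReal.ofReal (L ^ (1 - s) / (1 - s)) := by
    have : (Set.Icc (0:ℝ) L : Set ℝ) =ᵐ[volume] Set.Ioc (0:ℝ) L := Ioc_ae_eq_Icc.symm
    rw [setLIntegral_congr this]
    exact half_lintegral hs1 hL
  calc ∫⁻ u in Set.Icc (-L) L, ker s u ∂volume
      ≤ ∫⁻ u in Set.Icc (-L) 0 ∪ Set.Icc 0 L, ker s u ∂volume := by
        apply lintegral_mono_set
        intro x hx
        by_cases h : x ≤ 0
        · exact Or.inl ⟨hx.1, h⟩
        · exact Or.inr ⟨by linarith, hx.2⟩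
    _ ≤ (∫⁻ u in Set.Icc (-L) 0, ker s u ∂volume) + ∫⁻ u in Set.Icc 0 L, ker s u ∂volume :=
        lintegral_union_le _ _ _
    _ ≤ ENNReal.ofReal (L ^ (1 - s) / (1 - s)) + ENNReal.ofReal (L ^ (1 - s) / (1 - s)) := by
        rw [hneg]; exact add_le_add h0 h0
    _ = ENNReal.ofReal (2 * (L ^ (1 - s) / (1 - s))) := by
        have h1s : (0:ℝ) ≤ L ^ (1 - s) / (1 - s) := div_nonneg (Real.rpow_nonneg hL.le _) (by linarith)
        rw [← ENNReal.ofReal_add h1s h1s, two_mul]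

noncomputable def Cb (s L : ℝ) : ℝ := 2 * (L ^ (1 - s) / (1 - s)) + L ^ (1 - s)

lemma Cb_nonneg {s L : ℝ} (hs1 : s < 1) (hL : 0 < L) : 0 ≤ Cb s L :=
  add_nonneg (mul_nonneg (by norm_num) (div_nonneg (Real.rpow_nonneg hL.le _) (by linarith)))
    (Real.rpow_nonneg hL.le _)

lemma bnd_lintegral {s L : ℝ} (hs0 : 0 < s) (hs1 : s < 1) (hL : 0 < L)
    {J : Set ℝ} (hJ : volume J ≤ ENNReal.ofReal L) :
    ∫⁻ u in J, ker s u ∂volume ≤ ENNReal.ofReal (Cb s L) := by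
  have hsplit : J ⊆ (J ∩ Set.Icc (-L) L) ∪ (J \ Set.Icc (-L) L) := by
    intro x hx; by_cases h : x ∈ Set.Icc (-L) L
    · exact Or.inl ⟨hx, h⟩
    · exact Or.inr ⟨hx, h⟩
  calc ∫⁻ u in J, ker s u ∂volume
      ≤ ∫⁻ u in (J ∩ Set.Icc (-L) L) ∪ (J \ Set.Icc (-L) L), ker s u ∂volume :=
        lintegral_mono_set hsplit
    _ ≤ (∫⁻ u in J ∩ Set.Icc (-L) L, ker s u ∂volume)
        + ∫⁻ u in J \ Set.Icc (-L) L, ker s u ∂volume := lintegral_union_le _ _ _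
    _ ≤ ENNReal.ofReal (2 * (L ^ (1 - s) / (1 - s))) + ENNReal.ofReal (L ^ (1 - s)) := by
        gcongr
        · exact le_trans (lintegral_mono_set inter_subset_right) (sym_lintegral hs1 hL)
        · calc ∫⁻ u in J \ Set.Icc (-L) L, ker s u ∂volume
              ≤ ∫⁻ _ in J \ Set.Icc (-L) L, ENNReal.ofReal (L ^ (-s)) ∂volume := by
                refine setLIntegral_mono_ae aemeasurable_const ?_
                filter_upwards [] with u hu
                have habs : |L| ≤ |u| := by
                  rw [abs_of_pos hL]
                  by_contra hcon
                  push_neg at hcon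
                  exact hu.2 ⟨by linarith [neg_abs_le u], by linarith [le_abs_self u]⟩
                have := ker_anti hs0 habs
                rwa [ker_eq_ofReal (ne_of_gt hL), abs_of_pos hL] at this
            _ = ENNReal.ofReal (L ^ (-s)) * volume (J \ Set.Icc (-L) L) := setLIntegral_const _ _
            _ ≤ ENNReal.ofReal (L ^ (-s)) * ENNReal.ofReal L := by
                gcongr
                exact le_trans (measure_mono diff_subset) hJ
            _ = ENNReal.ofReal (L ^ (1 - s)) := by
                rw [← ENNReal.ofReal_mul (Real.rpow_nonneg hL.le _)]
                congr 1
                rw [show (1:ℝ) - s = -s + 1 by ring, Real.rpow_add hL, Real.rpow_one]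
    _ = ENNReal.ofReal (Cb s L) := by
        rw [← ENNReal.ofReal_add
          (mul_nonneg (by norm_num) (div_nonneg (Real.rpow_nonneg hL.le _) (by linarith)))
          (Real.rpow_nonneg hL.le _), Cb]

noncomputable def Cs (s : ℝ) : ℝ := 2 / (1 - s) + 1



lemma Cs_pos {s : ℝ} (hs1 : s < 1) : 0 < Cs s := by
  have : 0 < 2 / (1 - s) := div_pos two_pos (by linarith)
  simp only [Cs]; linarith

lemma affine_lintegral {s : ℝ} (hs0 : 0 < s) (hs1 : s < 1) (c d : ℝ) :
    ∫⁻ r in Set.Ioo (0:ℝ) 1, ker s (c + d * r) ∂volume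
      ≤ ENNReal.ofReal (Cs s) * ker s d := by
  rcases eq_or_ne d 0 with rfl | hd
  · have hk : ker s 0 = ⊤ := by
      simp only [ker, nnnorm_zero, ENNReal.coe_zero]
      exact ENNReal.zero_rpow_of_neg (by linarith)
    rw [hk, ENNReal.mul_top (ne_of_gt (ENNReal.ofReal_pos.2 (Cs_pos hs1)))]
    exact le_top
  · set φ : ℝ → ℝ := fun r => c + d * r with hφ
    have hφm : Measurable φ := (measurable_const_mul d).const_add c
    have hmapφ : Measure.map φ volume = ENNReal.ofReal |d⁻¹| • volume := by
      have hcomp : φ = (fun u => c + u) ∘ (fun r => d * r) := rfl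
      rw [hcomp, ← Measure.map_map (measurable_const_add c) (measurable_const_mul d),
        Real.map_volume_mul_left hd, Measure.map_smul, map_add_left_eq_self]
    set J : Set ℝ := Set.Icc (min c (c + d)) (max c (c + d)) with hJ
    have hsub : Set.Ioo (0:ℝ) 1 ⊆ φ ⁻¹' J := by
      intro r hr
      refine Set.mem_preimage.2 (Set.mem_Icc.2 ?_)
      show min c (c + d) ≤ c + d * r ∧ c + d * r ≤ max c (c + d)
      rcases le_total 0 d with h | h
      · have k1 : (0:ℝ) ≤ d * r := mul_nonneg h hr.1.le
        have k2 : d * r ≤ d := by nlinarith [hr.2]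
        exact ⟨(min_le_left _ _).trans (by linarith), le_trans (by linarith) (le_max_right _ _)⟩
      · have k1 : d * r ≤ 0 := mul_nonpos_of_nonpos_of_nonneg h hr.1.le
        have k2 : d ≤ d * r := by nlinarith [hr.2]
        exact ⟨(min_le_right _ _).trans (by linarith), le_trans (by linarith) (le_max_left _ _)⟩
    have hvolJ : volume J ≤ ENNReal.ofReal |d| := by
      rw [hJ, Real.volume_Icc]
      apply ENNReal.ofReal_le_ofReal
      rcases le_total 0 d with h | h
      · rw [max_eq_right (by linarith), min_eq_left (by linarith), abs_of_nonneg h]; ring_nf; rfl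
      · rw [max_eq_left (by linarith), min_eq_right (by linarith), abs_of_nonpos h]; ring_nf; rfl
    have habs : (0:ℝ) < |d| := abs_pos.2 hd
    calc ∫⁻ r in Set.Ioo (0:ℝ) 1, ker s (φ r) ∂volume
        ≤ ∫⁻ r in φ ⁻¹' J, ker s (φ r) ∂volume := lintegral_mono_set hsub
      _ = ∫⁻ u, ker s u ∂((volume.restrict (φ ⁻¹' J)).map φ) :=
          (lintegral_map (ker_meas s) hφm).symm
      _ = ∫⁻ u, ker s u ∂((ENNReal.ofReal |d⁻¹| • volume).restrict J) := by
          rw [← Measure.restrict_map hφm measurableSet_Icc, hmapφ]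
      _ = ENNReal.ofReal |d⁻¹| * ∫⁻ u in J, ker s u ∂volume := by
          rw [Measure.restrict_smul, lintegral_smul_measure, smul_eq_mul]
      _ ≤ ENNReal.ofReal |d⁻¹| * ENNReal.ofReal (Cb s |d|) := by
          gcongr
          exact bnd_lintegral hs0 hs1 habs hvolJ
      _ = ENNReal.ofReal (|d|⁻¹ * Cb s |d|) := by
          rw [← ENNReal.ofReal_mul (abs_nonneg _), abs_inv]
      _ = ENNReal.ofReal (Cs s) * ker s d := by
          rw [ker_eq_ofReal hd, ← ENNReal.ofReal_mul (Cs_pos hs1).le]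
          congr 1
          have h1 : |d| ^ (1 - s) * |d|⁻¹ = |d| ^ (-s) := by
            rw [← Real.rpow_neg_one |d|, ← Real.rpow_add habs]; congr 1; ring
          have h2 : Cb s |d| = (2 / (1 - s) + 1) * |d| ^ (1 - s) := by rw [Cb]; ring
          rw [h2, Cs]
          calc |d|⁻¹ * ((2 / (1 - s) + 1) * |d| ^ (1 - s))
              = (2 / (1 - s) + 1) * (|d| ^ (1 - s) * |d|⁻¹) := by ring
            _ = (2 / (1 - s) + 1) * |d| ^ (-s) := by rw [h1]

lemma ker_half {s : ℝ} (hs0 : 0 < s) (hs1 : s < 1) (x : ℝ) :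
    ker s (x / 2) ≤ 2 * ker s x := by
  rcases eq_or_ne x 0 with rfl | hx
  · simp only [zero_div]
    exact le_mul_of_one_le_left (by simp) (by norm_num)
  · rw [ker_eq_ofReal (div_ne_zero hx two_ne_zero), ker_eq_ofReal hx]
    rw [show (2:ℝ≥0∞) = ENNReal.ofReal 2 by norm_num,
      ← ENNReal.ofReal_mul (by norm_num)]
    apply ENNReal.ofReal_le_ofReal
    have hval : (|x| / 2) ^ (-s) = |x| ^ (-s) * 2 ^ s := by
      rw [Real.div_rpow (abs_nonneg x) (by norm_num), Real.rpow_neg (by norm_num : (0:ℝ) ≤ 2),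
        div_eq_mul_inv, inv_inv]
    rw [abs_div, abs_two, hval, mul_comm (2:ℝ)]
    have h2s : (2:ℝ) ^ s ≤ 2 := by
      calc (2:ℝ) ^ s ≤ 2 ^ (1:ℝ) :=
        Real.rpow_le_rpow_of_exponent_le (by norm_num) hs1.le
      _ = 2 := Real.rpow_one 2
    exact mul_le_mul_of_nonneg_left h2s (Real.rpow_nonneg (abs_nonneg x) _)

lemma energy_finite {a : ℝ → ℝ} (ha : Measurable a) {T : Set ℝ} (hTm : MeasurableSet T)
    (hT : T ⊆ Set.Ioo (1/2 : ℝ) 1) {s : ℝ} (hs0 : 0 < s) (hs1 : s < 1) :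
    ∫⁻ r in Set.Ioo (0:ℝ) 1, ∫⁻ t in T, ∫⁻ t' in T,
        ker s ((a t + r * t / 2) - (a t' + r * t' / 2)) ∂volume ∂volume ∂volume ≠ ⊤ := by
  set π := (volume.restrict T).prod (volume.restrict T) with hπ
  have hKm : Measurable (fun q : ℝ × (ℝ × ℝ) =>
      ker s ((a q.2.1 - a q.2.2) + ((q.2.1 - q.2.2) / 2) * q.1)) := by
    apply (ker_meas s).comp
    exact (((ha.comp (measurable_fst.comp measurable_snd)).sub
      (ha.comp (measurable_snd.comp measurable_snd))).add
      ((((measurable_fst.comp measurable_snd).sub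
        (measurable_snd.comp measurable_snd)).div_const 2).mul measurable_fst))
  have hrw : ∀ r t t' : ℝ, ker s ((a t + r * t / 2) - (a t' + r * t' / 2))
      = ker s ((a t - a t') + ((t - t') / 2) * r) := by
    intro r t t'; congr 1; ring
  have h1 : ∀ r : ℝ, (∫⁻ t in T, ∫⁻ t' in T,
        ker s ((a t + r * t / 2) - (a t' + r * t' / 2)) ∂volume ∂volume)
      = ∫⁻ p, ker s ((a p.1 - a p.2) + ((p.1 - p.2) / 2) * r) ∂π := by
    intro r
    have hm : Measurable fun p : ℝ × ℝ => ker s ((a p.1 - a p.2) + ((p.1 - p.2) / 2) * r) :=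
      (ker_meas s).comp (((ha.comp measurable_fst).sub (ha.comp measurable_snd)).add
        (((measurable_fst.sub measurable_snd).div_const 2).mul measurable_const))
    rw [hπ, lintegral_prod _ hm.aemeasurable]
    simp only [hrw]
  simp only [h1]
  rw [lintegral_lintegral_swap (hKm.aemeasurable)]
  have h2 : ∀ p : ℝ × ℝ,
      (∫⁻ r in Set.Ioo (0:ℝ) 1, ker s ((a p.1 - a p.2) + ((p.1 - p.2) / 2) * r) ∂volume)
        ≤ ENNReal.ofReal (Cs s) * (2 * ker s (p.1 - p.2)) := by
    intro p
    refine le_trans (affine_lintegral hs0 hs1 _ _) ?_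
    gcongr
    exact ker_half hs0 hs1 _
  have hkpm : Measurable (fun p : ℝ × ℝ => ker s (p.1 - p.2)) :=
    (ker_meas s).comp (measurable_fst.sub measurable_snd)
  have hinner : ∀ t ∈ T, (∫⁻ t' in T, ker s (t - t') ∂volume) ≤ ENNReal.ofReal (Cb s 2) := by
    intro t ht
    have hψm : Measurable (fun t' : ℝ => t - t') := measurable_const.sub measurable_id
    have hmap : Measure.map (fun t' : ℝ => t - t') volume = volume := by
      have hc : (fun t' : ℝ => t - t') = (fun u : ℝ => t + u) ∘ Neg.neg := by
        funext u; simp [sub_eq_add_neg]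
      rw [hc, ← Measure.map_map (measurable_const_add t) measurable_neg,
        Measure.map_neg_eq_self, map_add_left_eq_self]
    have hsub : T ⊆ (fun t' : ℝ => t - t') ⁻¹' (Set.Icc (-1) 1) := by
      intro t' ht'
      have h1 := hT ht; have h2 := hT ht'
      simp only [Set.mem_preimage, Set.mem_Icc]
      exact ⟨by linarith [h1.1, h2.2], by linarith [h1.2, h2.1]⟩
    calc (∫⁻ t' in T, ker s (t - t') ∂volume)
        ≤ ∫⁻ t' in (fun t' : ℝ => t - t') ⁻¹' (Set.Icc (-1) 1), ker s (t - t') ∂volume :=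
          lintegral_mono_set hsub
      _ = ∫⁻ u, ker s u ∂((volume.restrict ((fun t' : ℝ => t - t') ⁻¹' (Set.Icc (-1) 1))).map
            (fun t' : ℝ => t - t')) := (lintegral_map (ker_meas s) hψm).symm
      _ = ∫⁻ u in Set.Icc (-1:ℝ) 1, ker s u ∂volume := by
          rw [← Measure.restrict_map hψm measurableSet_Icc, hmap]
      _ ≤ ENNReal.ofReal (Cb s 2) := by
          refine bnd_lintegral hs0 hs1 two_pos ?_
          rw [Real.volume_Icc]
          norm_num
  have hdouble : (∫⁻ p, ker s (p.1 - p.2) ∂π) ≤ ENNReal.ofReal (Cb s 2) := by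
    rw [hπ, lintegral_prod _ hkpm.aemeasurable]
    calc (∫⁻ t in T, ∫⁻ t' in T, ker s (t - t') ∂volume ∂volume)
        ≤ ∫⁻ _ in T, ENNReal.ofReal (Cb s 2) ∂volume := by
          refine setLIntegral_mono_ae aemeasurable_const ?_
          filter_upwards [] with t ht
          exact hinner t ht
      _ = ENNReal.ofReal (Cb s 2) * volume T := setLIntegral_const _ _
      _ ≤ ENNReal.ofReal (Cb s 2) * 1 := by
          gcongr
          calc volume T ≤ volume (Set.Ioo (1/2 : ℝ) 1) := measure_mono hT
            _ ≤ 1 := by rw [Real.volume_Ioo]; norm_num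
      _ = ENNReal.ofReal (Cb s 2) := mul_one _
  have htotal : (∫⁻ p, ∫⁻ r in Set.Ioo (0:ℝ) 1,
        ker s ((a p.1 - a p.2) + ((p.1 - p.2) / 2) * r) ∂volume ∂π)
      ≤ ENNReal.ofReal (Cs s) * (2 * ENNReal.ofReal (Cb s 2)) := by
    calc (∫⁻ p, ∫⁻ r in Set.Ioo (0:ℝ) 1,
          ker s ((a p.1 - a p.2) + ((p.1 - p.2) / 2) * r) ∂volume ∂π)
        ≤ ∫⁻ p, ENNReal.ofReal (Cs s) * (2 * ker s (p.1 - p.2)) ∂π := by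
          exact lintegral_mono h2

      _ = ENNReal.ofReal (Cs s) * (2 * ∫⁻ p, ker s (p.1 - p.2) ∂π) := by
          rw [lintegral_const_mul _ (hkpm.const_mul 2), lintegral_const_mul _ hkpm]
      _ ≤ ENNReal.ofReal (Cs s) * (2 * ENNReal.ofReal (Cb s 2)) := by gcongr
  refine ne_top_of_le_ne_top ?_ htotal
  exact ENNReal.mul_ne_top ENNReal.ofReal_ne_top
    (ENNReal.mul_ne_top (by norm_num) ENNReal.ofReal_ne_top)

lemma enn_anti {s : ℝ} (hs : 0 < s) {x y : ℝ≥0∞} (h : x ≤ y) : y ^ (-s) ≤ x ^ (-s) := by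
  rw [ENNReal.rpow_neg, ENNReal.rpow_neg]
  exact ENNReal.inv_le_inv.2 (ENNReal.rpow_le_rpow h hs.le)

lemma dim_lower {s : ℝ} (hs0 : 0 < s) (hs1 : s < 1) {g : ℝ → ℝ} (hg : Measurable g)
    {T : Set ℝ} (hTm : MeasurableSet T) (hTpos : volume T ≠ 0)
    {α β : ℝ} (hab : α < β) {G : Set (ℝ × ℝ)}
    (hG : ∀ t ∈ T, ∀ u ∈ Set.Icc α β, ((g t, u) : ℝ × ℝ) ∈ G)
    (hE : (∫⁻ t in T, ∫⁻ t' in T, ker s (g t - g t') ∂volume ∂volume) ≠ ⊤) :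
    ENNReal.ofReal (1 + s) ≤ dimH G := by
  classical
  set ψ : ℝ → ℝ≥0∞ := fun t => ∫⁻ t' in T, ker s (g t - g t') ∂volume with hψ
  have hkerm : Measurable (fun q : ℝ × ℝ => ker s (g q.1 - g q.2)) :=
    (ker_meas s).comp ((hg.comp measurable_fst).sub (hg.comp measurable_snd))
  have hψm : Measurable ψ := hkerm.lintegral_prod_right'
  -- find m with positive measure of T ∩ {ψ ≤ m}
  have hfin : ∃ m : ℕ, volume (T ∩ ψ ⁻¹' (Set.Iic (m : ℝ≥0∞))) ≠ 0 := by
    by_contra hcon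
    push_neg at hcon
    have hae : ∀ᵐ t ∂(volume.restrict T), ψ t < ⊤ := ae_lt_top hψm hE
    have hsub : T ⊆ (T ∩ ψ ⁻¹' {⊤}) ∪ ⋃ m : ℕ, T ∩ ψ ⁻¹' (Set.Iic (m : ℝ≥0∞)) := by
      intro t ht
      rcases eq_or_ne (ψ t) ⊤ with h | h
      · exact Or.inl ⟨ht, h⟩
      · rcases ENNReal.exists_nat_gt h with ⟨m, hm⟩
        exact Or.inr (Set.mem_iUnion.2 ⟨m, ht, hm.le⟩)
    have h1 : volume (T ∩ ψ ⁻¹' {⊤}) = 0 := by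
      have h0 : ∀ᵐ t ∂(volume : Measure ℝ), t ∈ T → ψ t < ⊤ := (ae_restrict_iff' hTm).1 hae
      refine measure_mono_null ?_ (ae_iff.1 h0)
      intro t ht
      simp only [Set.mem_setOf_eq, Classical.not_imp, not_lt, top_le_iff]
      exact ⟨ht.1, ht.2⟩
    have h2 : volume ((T ∩ ψ ⁻¹' {⊤}) ∪ ⋃ m : ℕ, T ∩ ψ ⁻¹' (Set.Iic (m : ℝ≥0∞))) = 0 := by
      refine measure_union_null h1 ?_
      exact measure_iUnion_null fun m => hcon m
    exact hTpos (measure_mono_null hsub h2)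
  obtain ⟨m, hm⟩ := hfin
  set M : ℝ≥0∞ := (m : ℝ≥0∞) + 1 with hM
  have hM0 : M ≠ 0 := by simp [hM]
  have hMtop : M ≠ ⊤ := by simp [hM]
  set T' : Set ℝ := T ∩ ψ ⁻¹' (Set.Iic (m : ℝ≥0∞)) with hT'
  have hT'm : MeasurableSet T' := hTm.inter (hψm measurableSet_Iic)
  have hT'sub : T' ⊆ T := Set.inter_subset_left
  -- key ball estimate
  have hclaim : ∀ t₀ ∈ T', ∀ ρ : ℝ≥0∞,
      volume {t | t ∈ T' ∧ edist (g t) (g t₀) ≤ ρ} ≤ M * ρ ^ s := by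
    intro t₀ ht₀ ρ
    set S : Set ℝ := {t | t ∈ T' ∧ edist (g t) (g t₀) ≤ ρ} with hS
    have hSsub : S ⊆ T := fun t ht => hT'sub ht.1
    have hSm : MeasurableSet S :=
      hT'm.inter ((hg.edist measurable_const) measurableSet_Iic)
    have hlow : ρ ^ (-s) * volume S ≤ M := by
      calc ρ ^ (-s) * volume S = ∫⁻ _ in S, ρ ^ (-s) ∂volume := by
            rw [setLIntegral_const, mul_comm]
        _ ≤ ∫⁻ t in S, ker s (g t₀ - g t) ∂volume := by
            refine setLIntegral_mono (hkerm.comp (measurable_const.prodMk measurable_id)) ?_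
            intro t ht
            have : edist (g t₀) (g t) ≤ ρ := by
              rw [edist_comm]; exact ht.2
            have hed : (‖g t₀ - g t‖₊ : ℝ≥0∞) ≤ ρ := by
              rwa [← enorm_eq_nnnorm, ← edist_eq_enorm_sub]
            exact enn_anti hs0 hed
        _ ≤ ∫⁻ t in T, ker s (g t₀ - g t) ∂volume := lintegral_mono_set hSsub
        _ = ψ t₀ := rfl
        _ ≤ (m : ℝ≥0∞) := ht₀.2
        _ ≤ M := le_self_add
    rcases eq_or_ne ρ 0 with rfl | hρ0
    · have : volume S = 0 := by
        by_contra hv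
        rw [ENNReal.zero_rpow_of_neg (by linarith), ENNReal.top_mul hv] at hlow
        exact hMtop (top_le_iff.1 hlow)
      simp [this]
    rcases eq_or_ne ρ ⊤ with rfl | hρt
    · rw [ENNReal.top_rpow_of_pos hs0, ENNReal.mul_top hM0]
      exact le_top
    · calc volume S = ρ ^ s * ρ ^ (-s) * volume S := by
            rw [← ENNReal.rpow_add _ _ hρ0 hρt]
            simp
        _ = ρ ^ s * (ρ ^ (-s) * volume S) := by ring
        _ ≤ ρ ^ s * M := by gcongr
        _ = M * ρ ^ s := by ring
  set I : Set ℝ := Set.Icc α β with hI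
  set F : ℝ × ℝ → ℝ × ℝ := fun p => (g p.1, p.2) with hF
  have hFm : Measurable F := (hg.comp measurable_fst).prodMk measurable_snd
  set μ : Measure (ℝ × ℝ) := Measure.map F ((volume.restrict T').prod (volume.restrict I)) with hμ
  have hball : ∀ (z : ℝ × ℝ) (ρ : ℝ≥0∞), ρ ≠ ⊤ →
      μ (EMetric.closedBall z ρ) ≤ 4 * M * ρ ^ (1 + s) := by
    intro z ρ hρt
    have hA : MeasurableSet {x : ℝ | edist x z.1 ≤ ρ} :=
      (measurable_id.edist measurable_const) measurableSet_Iic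
    have hB : MeasurableSet {u : ℝ | edist u z.2 ≤ ρ} :=
      (measurable_id.edist measurable_const) measurableSet_Iic
    have hcb : MeasurableSet (EMetric.closedBall z ρ) :=
      (measurable_id.edist measurable_const) measurableSet_Iic
    rw [hμ, Measure.map_apply hFm hcb]
    have hpre : F ⁻¹' EMetric.closedBall z ρ
        = (g ⁻¹' {x : ℝ | edist x z.1 ≤ ρ}) ×ˢ {u : ℝ | edist u z.2 ≤ ρ} := by
      ext p
      simp only [Set.mem_preimage, EMetric.mem_closedBall, Set.mem_prod, Set.mem_setOf_eq, hF]
      show edist (g p.1, p.2) z ≤ ρ ↔ _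
      rw [Prod.edist_eq, max_le_iff]
    rw [hpre, Measure.prod_prod, Measure.restrict_apply (hg hA), Measure.restrict_apply hB]
    have hfac2 : volume ({u : ℝ | edist u z.2 ≤ ρ} ∩ I) ≤ 2 * ρ := by
      have : {u : ℝ | edist u z.2 ≤ ρ} = Metric.closedBall z.2 ρ.toReal := by
        rw [← Metric.emetric_closedBall ENNReal.toReal_nonneg, ENNReal.ofReal_toReal hρt]
        rfl
      calc volume ({u : ℝ | edist u z.2 ≤ ρ} ∩ I) ≤ volume (Metric.closedBall z.2 ρ.toReal) := by
            rw [← this]; exact measure_mono Set.inter_subset_left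
        _ = ENNReal.ofReal (2 * ρ.toReal) := Real.volume_closedBall _ _
        _ = 2 * ρ := by
            rw [ENNReal.ofReal_mul (by norm_num), ENNReal.ofReal_toReal hρt]
            norm_num
    have hfac1 : volume (g ⁻¹' {x : ℝ | edist x z.1 ≤ ρ} ∩ T') ≤ M * (2 * ρ) ^ s := by
      rcases Set.eq_empty_or_nonempty (g ⁻¹' {x : ℝ | edist x z.1 ≤ ρ} ∩ T') with he | ⟨t₀, ht₀⟩
      · rw [he]; simp
      · have hsub : g ⁻¹' {x : ℝ | edist x z.1 ≤ ρ} ∩ T'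
            ⊆ {t | t ∈ T' ∧ edist (g t) (g t₀) ≤ 2 * ρ} := by
          intro t ht
          refine ⟨ht.2, ?_⟩
          calc edist (g t) (g t₀) ≤ edist (g t) z.1 + edist z.1 (g t₀) := edist_triangle _ _ _
            _ ≤ ρ + ρ := by
                refine add_le_add ht.1 ?_
                rw [edist_comm]; exact ht₀.1
            _ = 2 * ρ := (two_mul ρ).symm
        exact le_trans (measure_mono hsub) (hclaim t₀ ht₀.2 (2 * ρ))
    calc volume (g ⁻¹' {x : ℝ | edist x z.1 ≤ ρ} ∩ T') * volume ({u : ℝ | edist u z.2 ≤ ρ} ∩ I)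
        ≤ (M * (2 * ρ) ^ s) * (2 * ρ) := mul_le_mul' hfac1 hfac2
      _ ≤ (M * (2 * ρ ^ s)) * (2 * ρ) := by
          gcongr
          rw [ENNReal.mul_rpow_of_nonneg _ _ hs0.le]
          gcongr
          calc (2:ℝ≥0∞) ^ s ≤ 2 ^ (1:ℝ) :=
              ENNReal.rpow_le_rpow_of_exponent_le one_le_two hs1.le
            _ = 2 := ENNReal.rpow_one 2
      _ = 4 * M * (ρ ^ (1:ℝ) * ρ ^ s) := by rw [ENNReal.rpow_one]; ring
      _ = 4 * M * ρ ^ (1 + s) := by rw [← ENNReal.rpow_add_of_nonneg _ _ zero_le_one hs0.le]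
  have hmass : ∀ S : Set (ℝ × ℝ), EMetric.diam S ≤ 1 →
      μ S ≤ 4 * M * (EMetric.diam S) ^ (1 + s) := by
    intro S hS
    rcases S.eq_empty_or_nonempty with rfl | ⟨z, hz⟩
    · simp
    · have hsub : S ⊆ EMetric.closedBall z (EMetric.diam S) := fun y hy =>
        EMetric.edist_le_diam_of_mem hy hz
      exact le_trans (measure_mono hsub)
        (hball z _ (lt_of_le_of_lt hS ENNReal.one_lt_top).ne)
  have hc0 : (4 : ℝ≥0∞) * M ≠ 0 := by simp [hM0]
  have hctop : (4 : ℝ≥0∞) * M ≠ ⊤ := ENNReal.mul_ne_top (by norm_num) hMtop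
  have hle : ((4 * M)⁻¹ • μ) ≤ μH[1 + s] := by
    refine Measure.le_hausdorffMeasure _ _ 1 zero_lt_one fun S hS => ?_
    rw [Measure.smul_apply, smul_eq_mul]
    calc (4 * M)⁻¹ * μ S ≤ (4 * M)⁻¹ * (4 * M * (EMetric.diam S) ^ (1 + s)) := by
          gcongr
          exact hmass S hS
      _ = (EMetric.diam S) ^ (1 + s) := by
          rw [← mul_assoc, ENNReal.inv_mul_cancel hc0 hctop, one_mul]
  have hμG : μ G ≠ 0 := by
    have h1 : ((volume.restrict T').prod (volume.restrict I)) (F ⁻¹' G) ≤ μ G :=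
      Measure.le_map_apply hFm.aemeasurable G
    have hsub2 : T' ×ˢ I ⊆ F ⁻¹' G := fun p hp => hG p.1 (hT'sub hp.1) p.2 hp.2
    have h2 : volume T' * volume I ≤ μ G := by
      refine le_trans ?_ h1
      calc volume T' * volume I
          = ((volume.restrict T').prod (volume.restrict I)) (T' ×ˢ I) := by
            rw [Measure.prod_prod, Measure.restrict_apply_self, Measure.restrict_apply_self]
        _ ≤ ((volume.restrict T').prod (volume.restrict I)) (F ⁻¹' G) := measure_mono hsub2
    intro h0
    rw [h0] at h2
    rcases mul_eq_zero.mp (nonpos_iff_eq_zero.1 h2) with h | h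
    · exact hm h
    · have hIvol : volume I ≠ 0 := by
        rw [hI, Real.volume_Icc]
        exact ne_of_gt (ENNReal.ofReal_pos.2 (by linarith))
      exact hIvol h
  have hH : μH[1 + s] G ≠ 0 := by
    intro h0
    have := hle G
    rw [h0, Measure.smul_apply, smul_eq_mul, nonpos_iff_eq_zero] at this
    rcases mul_eq_zero.mp this with h | h
    · exact (ENNReal.inv_ne_zero.2 hctop) h
    · exact hμG h
  have hd : (((1 + s).toNNReal : ℝ≥0∞)) ≤ dimH G := by
    refine le_dimH_of_hausdorffMeasure_ne_zero (d := (1 + s).toNNReal) ?_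
    rwa [Real.coe_toNNReal _ (by linarith)]
  rwa [show ENNReal.ofReal (1 + s) = (((1 + s).toNNReal : ℝ≥0∞)) from rfl]

lemma energy_meas {a : ℝ → ℝ} (ha : Measurable a) {T : Set ℝ} {s : ℝ} :
    Measurable (fun r : ℝ => ∫⁻ t in T, ∫⁻ t' in T,
      ker s ((a t + r * t / 2) - (a t' + r * t' / 2)) ∂volume ∂volume) := by
  have h1 : Measurable (fun q : (ℝ × ℝ) × ℝ =>
      ker s ((a q.1.2 + q.1.1 * q.1.2 / 2) - (a q.2 + q.1.1 * q.2 / 2))) := by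
    apply (ker_meas s).comp
    apply Measurable.sub
    · exact (ha.comp (measurable_snd.comp measurable_fst)).add
        (((measurable_fst.comp measurable_fst).mul
          (measurable_snd.comp measurable_fst)).div_const 2)
    · exact (ha.comp measurable_snd).add
        (((measurable_fst.comp measurable_fst).mul measurable_snd).div_const 2)
  exact (h1.lintegral_prod_right' (ν := volume.restrict T)).lintegral_prod_right'
    (ν := volume.restrict T)

/-- For a Borel size cube packing `f : (0,1) → [0,1]²`, the shrunk sets
`G_r` have full Hausdorff dimension `2` for almost every ratio `r ∈ (0,1)`. -/
theorem shrunk_cube_packing_dimH (f : ℝ → ℝ × ℝ) (hf : Measurable f)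
    (hrange : ∀ t ∈ Set.Ioo (0:ℝ) 1, f t ∈ Set.Icc (0:ℝ) 1 ×ˢ Set.Icc (0:ℝ) 1) :
    ∀ᵐ r : ℝ, r ∈ Set.Ioo (0:ℝ) 1 →
      dimH (⋃ t ∈ Set.Ioo (0:ℝ) 1, {y : ℝ × ℝ | ‖y - f t‖ = r * t / 2}) = 2 := by
  classical
  set a : ℝ → ℝ := fun t => (f t).1 with haa
  set b : ℝ → ℝ := fun t => (f t).2 with hbb
  have ha : Measurable a := measurable_fst.comp hf
  have hb : Measurable b := measurable_snd.comp hf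
  set δ : ℕ → ℝ := fun n => 1 / (16 * ((n:ℝ) + 1)) with hδ
  have hδpos : ∀ n, 0 < δ n := fun n => by positivity
  set S : ℕ → ℕ → Set ℝ := fun n k =>
    Set.Ioo (1/2 : ℝ) 1 ∩ b ⁻¹' Set.Ico ((k:ℝ) * δ n) (((k:ℝ) + 1) * δ n) with hS
  have hSm : ∀ n k, MeasurableSet (S n k) := fun n k =>
    measurableSet_Ioo.inter (hb measurableSet_Ico)
  have hcover : ∀ n : ℕ, ∃ k : ℕ, volume (S n k) ≠ 0 := by
    intro n
    by_contra hcon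
    push_neg at hcon
    have hsub : Set.Ioo (1/2 : ℝ) 1 ⊆ ⋃ k : ℕ, S n k := by
      intro t ht
      have htIoo : t ∈ Set.Ioo (0:ℝ) 1 := ⟨by linarith [ht.1], ht.2⟩
      have hbt : b t ∈ Set.Icc (0:ℝ) 1 := (hrange t htIoo).2
      refine Set.mem_iUnion.2 ⟨⌊b t / δ n⌋₊, ht, ?_⟩
      have hx : (0:ℝ) ≤ b t / δ n := div_nonneg hbt.1 (hδpos n).le
      constructor
      · exact (le_div_iff₀ (hδpos n)).1 (Nat.floor_le hx)
      · exact (div_lt_iff₀ (hδpos n)).1 (Nat.lt_floor_add_one _)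
    have h0 : volume (Set.Ioo (1/2 : ℝ) 1) = 0 :=
      measure_mono_null hsub (measure_iUnion_null hcon)
    rw [Real.volume_Ioo] at h0
    have : (0:ℝ) < 1 - 1/2 := by norm_num
    exact (ne_of_gt (ENNReal.ofReal_pos.2 this)) h0
  choose kk hkk using hcover
  set T : ℕ → Set ℝ := fun n => S n (kk n) with hT
  set sj : ℕ → ℝ := fun j => 1 - 1 / ((j:ℝ) + 2) with hsj
  have hsj0 : ∀ j, 0 < sj j := by
    intro j
    have h2 : (1:ℝ) / ((j:ℝ) + 2) < 1 := by
      rw [div_lt_one (by positivity)]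
      linarith [Nat.cast_nonneg (α := ℝ) j]
    simp only [hsj]; linarith
  have hsj1 : ∀ j, sj j < 1 := by
    intro j
    have : (0:ℝ) < 1 / ((j:ℝ) + 2) := by positivity
    simp only [hsj]; linarith
  have hTsub : ∀ n, T n ⊆ Set.Ioo (1/2 : ℝ) 1 := fun n => Set.inter_subset_left
  have hae : ∀ᵐ r : ℝ, ∀ n j : ℕ, r ∈ Set.Ioo (0:ℝ) 1 →
      (∫⁻ t in T n, ∫⁻ t' in T n,
        ker (sj j) ((a t + r * t / 2) - (a t' + r * t' / 2)) ∂volume ∂volume) ≠ ⊤ := by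
    rw [ae_all_iff]
    intro n
    rw [ae_all_iff]
    intro j
    have hfin := energy_finite ha (hSm n (kk n)) (hTsub n) (hsj0 j) (hsj1 j)
    have := ae_lt_top (energy_meas ha (T := T n) (s := sj j)) hfin
    rw [ae_restrict_iff' measurableSet_Ioo] at this
    filter_upwards [this] with r hr hrmem
    exact (hr hrmem).ne
  filter_upwards [hae] with r hr hrIoo
  set G : Set (ℝ × ℝ) := ⋃ t ∈ Set.Ioo (0:ℝ) 1, {y : ℝ × ℝ | ‖y - f t‖ = r * t / 2} with hG
  -- upper bound
  have hupper : dimH G ≤ 2 := by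
    calc dimH G ≤ dimH (Set.univ : Set (ℝ × ℝ)) := dimH_mono (Set.subset_univ _)
      _ = 2 := by
        rw [Real.dimH_univ_eq_finrank]
        rw [Module.finrank_prod]
        norm_num
  -- choose n with 1/(n+1) < r
  obtain ⟨n, hn⟩ := exists_nat_gt (1 / r)
  have hrpos : 0 < r := hrIoo.1
  have hnr : 1 / ((n:ℝ) + 1) < r := by
    rw [div_lt_iff₀ (by positivity)]
    rw [div_lt_iff₀ hrpos] at hn
    nlinarith [hrpos]
  -- lower bound pieces
  have hlow : ∀ j : ℕ, ENNReal.ofReal (1 + sj j) ≤ dimH G := by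
    intro j
    set g : ℝ → ℝ := fun t => a t + r * t / 2 with hg
    have hgm : Measurable g := ha.add ((measurable_const.mul measurable_id).div_const 2)
    set α' : ℝ := ((kk n : ℝ) + 1) * δ n with hα
    set β' : ℝ := ((kk n : ℝ) + 2) * δ n with hβ
    have hab : α' < β' := by
      rw [hα, hβ]
      have := hδpos n
      nlinarith
    refine dim_lower (hsj0 j) (hsj1 j) hgm (hSm n (kk n)) (hkk n) hab ?_ ?_
    · -- geometric inclusion
      intro t ht u hu
      have htIoo2 : t ∈ Set.Ioo (1/2:ℝ) 1 := ht.1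
      have htIoo : t ∈ Set.Ioo (0:ℝ) 1 := ⟨by linarith [htIoo2.1], htIoo2.2⟩
      have hbt : b t ∈ Set.Ico ((kk n : ℝ) * δ n) (((kk n : ℝ) + 1) * δ n) := ht.2
      refine Set.mem_biUnion htIoo ?_
      have hrt : 1 / (4 * ((n:ℝ) + 1)) < r * t / 2 := by
        have h1 : 1 / ((n:ℝ) + 1) < r := hnr
        have h2 : (1:ℝ)/2 < t := htIoo2.1
        have hn1 : (0:ℝ) < (n:ℝ) + 1 := by positivity
        rw [div_lt_iff₀ (by positivity)]
        rw [div_lt_iff₀ hn1] at h1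
        nlinarith
      have hub : |u - b t| ≤ r * t / 2 := by
        have h1 : u - b t ≥ 0 := by
          have := hbt.2
          have := hu.1
          rw [hα] at *
          linarith
        have h2 : u - b t ≤ 2 * δ n := by
          have := hbt.1
          have := hu.2
          rw [hβ] at *
          nlinarith [hδpos n]
        have h3 : 2 * δ n ≤ 1 / (4 * ((n:ℝ) + 1)) := by
          rw [hδ]
          rw [show (2:ℝ) * (1 / (16 * ((n:ℝ) + 1))) = 1 / (8 * ((n:ℝ) + 1)) by
            field_simp; ring]
          apply one_div_le_one_div_of_le (by positivity)
          nlinarith [Nat.cast_nonneg (α := ℝ) n]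
        rw [abs_of_nonneg h1]
        linarith
      show ‖((g t, u) : ℝ × ℝ) - f t‖ = r * t / 2
      have hfst : ((g t, u) : ℝ × ℝ) - f t = (r * t / 2, u - b t) := by
        ext <;> simp [hg, haa, hbb] <;> ring
      rw [hfst, Prod.norm_def]
      simp only [Real.norm_eq_abs]
      rw [abs_of_nonneg (by nlinarith [htIoo.1, hrpos] : (0:ℝ) ≤ r * t / 2)]
      exact max_eq_left hub
    · exact hr n j hrIoo
  -- conclude
  refine le_antisymm hupper ?_
  have htend : Filter.Tendsto (fun j : ℕ => ENNReal.ofReal (1 + sj j))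
      Filter.atTop (nhds 2) := by
    have h1 : Filter.Tendsto (fun j : ℕ => ((j:ℝ) + 2)⁻¹) Filter.atTop (nhds 0) :=
      Filter.Tendsto.comp tendsto_inv_atTop_zero
        (Filter.tendsto_atTop_add_const_right _ 2 tendsto_natCast_atTop_atTop)
    have hreal : Filter.Tendsto (fun j : ℕ => 1 + sj j) Filter.atTop (nhds 2) := by
      have heq : (fun j : ℕ => 1 + sj j) = fun j : ℕ => 2 - ((j:ℝ) + 2)⁻¹ := by
        funext j
        simp only [hsj, one_div]
        ring
      rw [heq]
      have := Filter.Tendsto.sub (tendsto_const_nhds (x := (2:ℝ))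
        (f := Filter.atTop (α := ℕ))) h1
      simpa using this
    have h2 := ENNReal.tendsto_ofReal hreal
    rwa [show ENNReal.ofReal 2 = 2 by norm_num] at h2
  exact le_of_tendsto' htend hlow
end
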